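/- arXiv:2005.07417 — 4 statements merged into one kernel-verified Lean document; each statement's English description precedes it below -/
import Mathlib

section
/- The function $\psi_1$ is strictly positive on the open interval $(0,R)$. -/
open Set

noncomputable section

/-- The radial profile `u_*` of the first Dirichlet eigenfunction of
`-Δ - χ_{B(0,r*)}` on the disc `B(0,R) ⊂ ℝ²`, with derivative `u'` and
eigenvalue `lam`: `u_*` is `C¹` on `[0,R]`, positive on `[0,R)`, satisfies
`-(1/r)(r u')' = (lam + χ_{[0,r*)}) u` on `(0,R)` (away from the interface `r*`),
`u'(0) = 0`, `u(R) = 0`, and `u' < 0` on `(0,R]`. -/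
structure EigenProfile (R rs lam : ℝ) (u u' : ℝ → ℝ) : Prop where
  cont : ContinuousOn u (Icc 0 R)
  deriv : ∀ r ∈ Icc (0 : ℝ) R, HasDerivWithinAt u (u' r) (Icc 0 R) r
  derivCont : ContinuousOn u' (Icc 0 R)
  pos : ∀ r ∈ Ico (0 : ℝ) R, 0 < u r
  ode : ∀ r ∈ Ioo (0 : ℝ) R, r ≠ rs →
    HasDerivAt (fun s => s * u' s)
      (-(r * ((lam + (if r < rs then (1 : ℝ) else 0)) * u r))) r
  deriv0 : u' 0 = 0
  valR : u R = 0
  derivNeg : ∀ r ∈ Ioc (0 : ℝ) R, u' r < 0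

/-- The profile `ψ_k`: continuous on `[0,R]`, `C²` on `(0,r*)` and `(r*,R)`,
satisfying `-(1/r)(r ψ_k')' = (lam + χ_{[0,r*)} - k²/r²) ψ_k` there,
`ψ_k(0) = ψ_k(R) = 0`, and the jump of one-sided derivatives
`ψ_k'(r*⁺) - ψ_k'(r*⁻) = -u(r*)`; `dplus` and `dminus` are the one-sided
derivatives at `r*`. -/
structure PsiProfile (R rs lam : ℝ) (u : ℝ → ℝ) (k : ℕ) (ψ ψ' : ℝ → ℝ)
    (dplus dminus : ℝ) : Prop where
  cont : ContinuousOn ψ (Icc 0 R)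
  deriv : ∀ r ∈ Ioo (0 : ℝ) R, r ≠ rs → HasDerivAt ψ (ψ' r) r
  ode : ∀ r ∈ Ioo (0 : ℝ) R, r ≠ rs →
    HasDerivAt (fun s => s * ψ' s)
      (-(r * ((lam + (if r < rs then (1 : ℝ) else 0) - (k : ℝ) ^ 2 / r ^ 2) * ψ r))) r
  val0 : ψ 0 = 0
  valR : ψ R = 0
  jumpPlus : HasDerivWithinAt ψ dplus (Ioi rs) rs
  jumpMinus : HasDerivWithinAt ψ dminus (Iio rs) rs
  jump : dplus - dminus = -(u rs)

open Filter Topology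

lemma my_const_of_deriv_zero {f : ℝ → ℝ} {a b : ℝ}
    (hd : ∀ x ∈ Ioo a b, HasDerivAt f 0 x) :
    ∀ x ∈ Ioo a b, ∀ y ∈ Ioo a b, f x = f y := by
  have key : ∀ x ∈ Ioo a b, ∀ y ∈ Ioo a b, x < y → f x = f y := by
    intro x hx y hy hxy
    have hsub : Icc x y ⊆ Ioo a b := fun t ht => ⟨lt_of_lt_of_le hx.1 ht.1, lt_of_le_of_lt ht.2 hy.2⟩
    have hcont : ContinuousOn f (Icc x y) := fun t ht =>
      (hd t (hsub ht)).continuousAt.continuousWithinAt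
    obtain ⟨c, _, hc⟩ := exists_hasDerivAt_eq_slope f (fun _ => 0) hxy hcont
      (fun t ht => hd t (hsub ⟨ht.1.le, ht.2.le⟩))
    have hyx : y - x ≠ 0 := by
      have : x < y := hxy; intro h0; linarith [sub_eq_zero.mp h0]
    rw [eq_comm, div_eq_iff hyx] at hc
    linarith [hc]
  intro x hx y hy
  rcases lt_trichotomy x y with h | h | h
  · exact key x hx y hy h
  · rw [h]
  · exact (key y hy x hx h).symm

lemma my_blowup_aux {f f' : ℝ → ℝ} {b D : ℝ} (hb : 0 < b) (hD : 0 < D)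
    (hc : ContinuousOn f (Icc 0 b))
    (hd : ∀ r ∈ Ioo (0:ℝ) b, HasDerivAt f (f' r) r)
    (hlb : ∀ r ∈ Ioo (0:ℝ) b, D / r ^ 2 ≤ f' r) : False := by
  obtain ⟨M, hM⟩ := (isCompact_Icc : IsCompact (Icc (0:ℝ) b)).exists_bound_of_continuousOn hc
  have hM0 : 0 ≤ M := le_trans (norm_nonneg _) (hM 0 ⟨le_refl _, hb.le⟩)
  set X : ℝ := 2 * M + 2 * D / b + 1 with hX
  have hXpos : 0 < X := by positivity
  set a : ℝ := min (b / 4) (D / X) with ha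
  have hapos : 0 < a := lt_min (by positivity) (by positivity)
  have hab2 : a < b / 2 := lt_of_le_of_lt (min_le_left _ _) (by linarith)
  -- h r = f r + D / r is monotone on (0, b)
  set h : ℝ → ℝ := fun r => f r + D / r with hh
  have hmvt : h a ≤ h (b / 2) := by
    have hconth : ContinuousOn h (Icc a (b / 2)) := by
      apply ContinuousOn.add
      · exact hc.mono (fun t ht => ⟨le_trans hapos.le ht.1, by linarith [ht.2]⟩)
      · exact ContinuousOn.div continuousOn_const continuous_id.continuousOn
          (fun t ht => ne_of_gt (lt_of_lt_of_le hapos ht.1))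
    obtain ⟨c, hcmem, hc⟩ := exists_hasDerivAt_eq_slope h (fun r => f' r - D / r ^ 2) hab2 hconth
      (fun t ht => by
        have ht1 : 0 < t := lt_trans hapos ht.1
        have ht2 : t < b := by linarith [ht.2]
        have h1 : HasDerivAt (fun r => D / r) (-D / t ^ 2) t := by
          have := (hasDerivAt_const t D).div (hasDerivAt_id t) (ne_of_gt ht1)
          refine this.congr_deriv (Eq.symm ?_)
          simp only [Pi.neg_apply, Pi.add_apply, Pi.mul_apply, id_eq]; field_simp; ring
        have := (hd t ⟨ht1, ht2⟩).add h1
        refine this.congr_deriv (Eq.symm ?_)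
        ring)
    have hcmem' : c ∈ Ioo (0:ℝ) b := ⟨lt_trans hapos hcmem.1, by linarith [hcmem.2]⟩
    have hdiv : 0 ≤ (h (b/2) - h a) / (b/2 - a) := by
      rw [← hc]; linarith [hlb c hcmem']
    have hpos : 0 < b/2 - a := sub_pos.mpr hab2
    rcases div_nonneg_iff.mp hdiv with ⟨h1, _⟩ | ⟨_, h2⟩
    · linarith
    · linarith
  have hfa : -M ≤ f a := by
    have := hM a ⟨hapos.le, by linarith⟩
    rw [Real.norm_eq_abs] at this
    linarith [abs_le.mp this]
  have hfb2 : f (b/2) ≤ M := by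
    have := hM (b/2) ⟨by positivity, by linarith⟩
    rw [Real.norm_eq_abs] at this
    linarith [abs_le.mp this]
  have hDa : X ≤ D / a := by
    rw [le_div_iff₀ hapos]
    calc X * a ≤ X * (D / X) :=
          mul_le_mul_of_nonneg_left (min_le_right (b/4) (D/X)) hXpos.le
      _ = D := by field_simp
  have hDb2 : D / (b/2) = 2 * D / b := by field_simp
  have : h a ≤ M + 2 * D / b := by
    calc h a ≤ h (b/2) := hmvt
      _ = f (b/2) + D / (b/2) := rfl
      _ ≤ M + 2 * D / b := by rw [hDb2]; linarith
  have : -M + X ≤ M + 2 * D / b := by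
    calc -M + X ≤ f a + D / a := by linarith
      _ = h a := rfl
      _ ≤ M + 2 * D / b := this
  rw [hX] at this
  linarith

lemma my_hasDerivWithinAt_left {f f' : ℝ → ℝ} {a b L : ℝ} (hab : a < b)
    (hc : ContinuousOn f (Icc a b))
    (hd : ∀ x ∈ Ioo a b, HasDerivAt f (f' x) x)
    (hL : Tendsto f' (𝓝[Ioo a b] b) (𝓝 L)) :
    HasDerivWithinAt f L (Iio b) b := by
  have key : HasDerivWithinAt f L (Ioo a b) b := by
    rw [hasDerivWithinAt_iff_tendsto_slope]
    have hbs : b ∉ Ioo a b := fun h => lt_irrefl b h.2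
    rw [diff_singleton_eq_self hbs]
    rw [Metric.tendsto_nhdsWithin_nhds] at hL ⊢
    intro ε hε
    obtain ⟨δ, hδ, hδ'⟩ := hL ε hε
    refine ⟨δ, hδ, fun x hx hxd => ?_⟩
    obtain ⟨c, hcmem, hc⟩ := exists_hasDerivAt_eq_slope f f' hx.2
      (hc.mono (fun t ht => ⟨le_trans hx.1.le ht.1, ht.2⟩))
      (fun t ht => hd t ⟨lt_trans hx.1 ht.1, ht.2⟩)
    have hcmem' : c ∈ Ioo a b := ⟨lt_trans hx.1 hcmem.1, hcmem.2⟩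
    have hcd : dist c b < δ := by
      rw [Real.dist_eq] at hxd ⊢
      rw [abs_sub_lt_iff] at hxd ⊢
      constructor <;> [linarith [hcmem.2]; linarith [hcmem.1, hxd.2]]
    have hslope : slope f b x = f' c := by
      rw [slope_def_field, hc]
      have hne : x - b ≠ 0 := by intro h0; have := sub_eq_zero.mp h0; linarith [hx.2]
      have hne' : b - x ≠ 0 := by intro h0; have := sub_eq_zero.mp h0; linarith [hx.2]
      field_simp
      ring
    rw [hslope]
    exact hδ' hcmem' hcd
  exact key.mono_of_mem_nhdsWithin (mem_nhdsWithin.mpr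
    ⟨Ioi a, isOpen_Ioi, hab, fun t ht => ⟨ht.1, ht.2⟩⟩)

lemma my_hasDerivWithinAt_right {f f' : ℝ → ℝ} {a b L : ℝ} (hab : a < b)
    (hc : ContinuousOn f (Icc a b))
    (hd : ∀ x ∈ Ioo a b, HasDerivAt f (f' x) x)
    (hL : Tendsto f' (𝓝[Ioo a b] a) (𝓝 L)) :
    HasDerivWithinAt f L (Ioi a) a := by
  have key : HasDerivWithinAt f L (Ioo a b) a := by
    rw [hasDerivWithinAt_iff_tendsto_slope]
    have hbs : a ∉ Ioo a b := fun h => lt_irrefl a h.1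
    rw [diff_singleton_eq_self hbs]
    rw [Metric.tendsto_nhdsWithin_nhds] at hL ⊢
    intro ε hε
    obtain ⟨δ, hδ, hδ'⟩ := hL ε hε
    refine ⟨δ, hδ, fun x hx hxd => ?_⟩
    obtain ⟨c, hcmem, hc⟩ := exists_hasDerivAt_eq_slope f f' hx.1
      (hc.mono (fun t ht => ⟨ht.1, le_trans ht.2 hx.2.le⟩))
      (fun t ht => hd t ⟨ht.1, lt_trans ht.2 hx.2⟩)
    have hcmem' : c ∈ Ioo a b := ⟨hcmem.1, lt_trans hcmem.2 hx.2⟩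
    have hcd : dist c a < δ := by
      rw [Real.dist_eq] at hxd ⊢
      rw [abs_sub_lt_iff] at hxd ⊢
      constructor <;> [linarith [hcmem.2, hxd.1]; linarith [hcmem.1]]
    have hslope : slope f a x = f' c := by
      rw [slope_def_field, hc]
    rw [hslope]
    exact hδ' hcmem' hcd
  exact key.mono_of_mem_nhdsWithin (mem_nhdsWithin.mpr
    ⟨Iio b, isOpen_Iio, hab, fun t ht => ⟨ht.2, ht.1⟩⟩)

/-- the function `ψ₁` is strictly positive on `(0,R)`. -/
theorem psi_one_pos
    (R rs lam : ℝ) (hR : 0 < R) (hrs : 0 < rs) (hrsR : rs < R)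
    (u u' : ℝ → ℝ) (hu : EigenProfile R rs lam u u')
    (ψ ψ' : ℝ → ℝ) (dplus dminus : ℝ)
    (hψ : PsiProfile R rs lam u 1 ψ ψ' dplus dminus) :
    ∀ r ∈ Ioo (0 : ℝ) R, 0 < ψ r := by
  have hmemIcc : ∀ t ∈ Ioo (0:ℝ) R, Icc (0:ℝ) R ∈ 𝓝 t := fun t ht => Icc_mem_nhds ht.1 ht.2
  have hud : ∀ t ∈ Ioo (0:ℝ) R, HasDerivAt u (u' t) t := fun t ht =>
    (hu.deriv t ⟨ht.1.le, ht.2.le⟩).hasDerivAt (hmemIcc t ht)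
  have hucA : ∀ t ∈ Ioo (0:ℝ) R, ContinuousAt u t := fun t ht => (hud t ht).continuousAt
  have hu'cA : ∀ t ∈ Ioo (0:ℝ) R, ContinuousAt u' t := fun t ht =>
    hu.derivCont.continuousAt (hmemIcc t ht)
  have hpcA : ∀ t ∈ Ioo (0:ℝ) R, ContinuousAt ψ t := fun t ht =>
    hψ.cont.continuousAt (hmemIcc t ht)
  have hv : ∀ t, 0 < t → t ≤ R → 0 < -(u' t) := fun t h1 h2 =>
    neg_pos.mpr (hu.derivNeg t ⟨h1, h2⟩)
  have hrsIoo : rs ∈ Ioo (0:ℝ) R := ⟨hrs, hrsR⟩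
  have hvrs : 0 < -(u' rs) := hv rs hrs hrsR.le
  have hurs : 0 < u rs := hu.pos rs ⟨hrs.le, hrsR⟩
  -- Wronskian derivative
  have hWd : ∀ q : ℝ, ∀ t ∈ Ioo (0:ℝ) R, t ≠ rs →
      (lam + (if t < rs then (1:ℝ) else 0) = q) →
      HasDerivAt (fun r => r * ψ' r * -(u' r) - ψ r * (u' r + r * q * u r)) 0 t := by
    intro q t ht htne hq
    have ht0 : (0:ℝ) < t := ht.1
    have htne0 : t ≠ 0 := ne_of_gt ht0
    have hΨ : HasDerivAt (fun s => s * ψ' s) (-(t * ((q - 1/t^2) * ψ t))) t := by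
      convert hψ.ode t ht htne using 2
      rw [← hq]
      push_cast
      ring
    have hG : HasDerivAt (fun s => s * u' s) (-(t * (q * u t))) t := by
      convert hu.ode t ht htne using 2
      rw [← hq]
    have hG' : HasDerivAt (fun s => s * u' s / s)
        ((-(t * (q * u t)) * t - t * u' t * 1) / t ^ 2) t :=
      hG.div (hasDerivAt_id t) htne0
    have hF := (hΨ.mul hG'.neg).sub
      ((hψ.deriv t ht htne).mul (hG'.add ((hasDerivAt_id t).mul ((hud t ht).const_mul q))))
    have hev : (fun r => r * ψ' r * -(u' r) - ψ r * (u' r + r * q * u r)) =ᶠ[𝓝 t]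
        (fun s => (s * ψ' s) * -(s * u' s / s) - ψ s * (s * u' s / s + s * (q * u s))) := by
      filter_upwards [Ioi_mem_nhds ht0] with s hs
      have hs0 : s ≠ 0 := ne_of_gt hs
      rw [mul_div_cancel_left₀ (u' s) hs0]
      ring
    have hRes := hF.congr_of_eventuallyEq hev
    refine hRes.congr_deriv (Eq.symm ?_)
    simp only [Pi.neg_apply, Pi.add_apply, Pi.mul_apply, id_eq]; field_simp
    ring
  -- constants on the two intervals
  obtain ⟨c1, hc1⟩ : ∃ c1, ∀ x ∈ Ioo (0:ℝ) rs,
      x * ψ' x * -(u' x) - ψ x * (u' x + x * (lam+1) * u x) = c1 := by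
    have hder : ∀ t ∈ Ioo (0:ℝ) rs,
        HasDerivAt (fun r => r * ψ' r * -(u' r) - ψ r * (u' r + r * (lam+1) * u r)) 0 t :=
      fun t ht => hWd (lam+1) t ⟨ht.1, lt_trans ht.2 hrsR⟩ (ne_of_lt ht.2)
        (by rw [if_pos ht.2])
    exact ⟨_, fun x hx => my_const_of_deriv_zero hder x hx (rs/2) ⟨by linarith, by linarith⟩⟩
  obtain ⟨c2, hc2⟩ : ∃ c2, ∀ x ∈ Ioo rs R,
      x * ψ' x * -(u' x) - ψ x * (u' x + x * lam * u x) = c2 := by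
    have hder : ∀ t ∈ Ioo rs R,
        HasDerivAt (fun r => r * ψ' r * -(u' r) - ψ r * (u' r + r * lam * u r)) 0 t :=
      fun t ht => hWd lam t ⟨lt_trans hrs ht.1, ht.2⟩ (ne_of_gt ht.1)
        (by rw [if_neg (not_lt.mpr ht.1.le)]; ring)
    exact ⟨_, fun x hx => my_const_of_deriv_zero hder x hx ((rs+R)/2) ⟨by linarith, by linarith⟩⟩
  -- bound on u and -u' near 0
  obtain ⟨C₀, hC₀⟩ := (isCompact_Icc : IsCompact (Icc (0:ℝ) R)).exists_bound_of_continuousOn hu.cont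
  have hC₀0 : 0 ≤ C₀ := le_trans (norm_nonneg _) (hC₀ 0 ⟨le_refl _, hR.le⟩)
  obtain ⟨C, hCdef⟩ : ∃ c : ℝ, c = (|lam| + 1) * C₀ + 1 := ⟨_, rfl⟩
  have hCpos : 0 < C := by rw [hCdef]; positivity
  have hvb : ∀ r ∈ Ioo (0:ℝ) rs, -(u' r) ≤ C * r := by
    intro r hrr
    have hr0 : 0 < r := hrr.1
    have hrR : r < R := lt_trans hrr.2 hrsR
    have hcontG : ContinuousOn (fun s => s * u' s) (Icc 0 r) :=
      (continuous_id.continuousOn).mul (hu.derivCont.mono (Icc_subset_Icc le_rfl hrR.le))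
    obtain ⟨c, hcm, hcv⟩ := exists_hasDerivAt_eq_slope (fun s => s * u' s)
      (fun s => -(s * ((lam + (if s < rs then (1:ℝ) else 0)) * u s))) hr0 hcontG
      (fun t htt => hu.ode t ⟨htt.1, lt_trans (lt_trans htt.2 hrr.2) hrsR⟩
        (ne_of_lt (lt_trans htt.2 hrr.2)))
    rw [if_pos (lt_trans hcm.2 hrr.2)] at hcv
    have hur : u' r = -(c * ((lam + 1) * u c)) := by
      rw [hcv]
      simp only [zero_mul, sub_zero]; field_simp
    have h1 : |u c| ≤ C₀ := by
      have := hC₀ c ⟨hcm.1.le, le_trans hcm.2.le hrR.le⟩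
      rwa [Real.norm_eq_abs] at this
    have h2 : |lam + 1| ≤ |lam| + 1 := (abs_add_le _ _).trans (by norm_num)
    have hc0 : 0 < c := hcm.1
    calc -(u' r) = c * ((lam + 1) * u c) := by rw [hur]; ring
      _ ≤ |c * ((lam + 1) * u c)| := le_abs_self _
      _ = c * (|lam + 1| * |u c|) := by
          rw [abs_mul, abs_mul, abs_of_pos hc0]
      _ ≤ r * ((|lam| + 1) * C₀) := by
          gcongr
          exact hcm.2.le
      _ ≤ C * r := by rw [hCdef]; nlinarith [hr0]
  -- c1 = 0
  have hc1zero : c1 = 0 := by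
    by_contra hne
    have h0mem : (0:ℝ) ∈ Icc (0:ℝ) R := ⟨le_refl _, hR.le⟩
    have hcw : ContinuousWithinAt (fun r => c1 + ψ r * (u' r + r * (lam+1) * u r)) (Icc 0 R) 0 := by
      apply ContinuousWithinAt.add continuousWithinAt_const
      apply ContinuousWithinAt.mul (hψ.cont 0 h0mem)
      apply ContinuousWithinAt.add (hu.derivCont 0 h0mem)
      exact (continuousWithinAt_id.mul continuousWithinAt_const).mul (hu.cont 0 h0mem)
    have htend : Tendsto (fun r => c1 + ψ r * (u' r + r * (lam+1) * u r)) (𝓝[Icc 0 R] 0) (𝓝 c1) := by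
      have h2 := hcw.tendsto
      simpa [hψ.val0] using h2
    have htend2 : Tendsto (fun r => c1 + ψ r * (u' r + r * (lam+1) * u r))
        (𝓝[Ioo (0:ℝ) rs] 0) (𝓝 c1) :=
      htend.mono_left (nhdsWithin_mono 0 (fun t ht => ⟨ht.1.le, le_trans ht.2.le hrsR.le⟩))
    rw [Metric.tendsto_nhdsWithin_nhds] at htend2
    have habs : 0 < |c1| := abs_pos.mpr hne
    obtain ⟨δ, hδ, hδ'⟩ := htend2 (|c1|/2) (by linarith)
    set b : ℝ := min (δ/2) (rs/2) with hbdef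
    have hb0 : 0 < b := lt_min (by linarith) (by linarith)
    have hbrs : b < rs := lt_of_le_of_lt (min_le_right _ _) (by linarith)
    have hNb : ∀ r ∈ Ioo (0:ℝ) b, |c1 + ψ r * (u' r + r * (lam+1) * u r) - c1| < |c1|/2 := by
      intro r hrr
      apply hδ' ⟨hrr.1, lt_trans hrr.2 hbrs⟩
      rw [Real.dist_eq, sub_zero, abs_of_pos hrr.1]
      exact lt_of_lt_of_le (lt_of_lt_of_le hrr.2 (min_le_left _ _)) (by linarith)
    have hsub : Ioo (0:ℝ) b ⊆ Ioo (0:ℝ) rs := fun t ht => ⟨ht.1, lt_trans ht.2 hbrs⟩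
    have hpcont' : ContinuousOn ψ (Icc 0 b) := hψ.cont.mono (Icc_subset_Icc le_rfl (by linarith))
    have hpd' : ∀ r ∈ Ioo (0:ℝ) b, HasDerivAt ψ (ψ' r) r := fun r hrr =>
      hψ.deriv r ⟨hrr.1, lt_trans (lt_trans hrr.2 hbrs) hrsR⟩ (ne_of_lt (lt_trans hrr.2 hbrs))
    have hcommon : ∀ r ∈ Ioo (0:ℝ) b,
        ψ' r * (r * -(u' r)) = c1 + ψ r * (u' r + r * (lam+1) * u r) ∧
        0 < r * -(u' r) ∧ r * -(u' r) ≤ C * r^2 := by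
      intro r hrr
      have hrrs := hsub hrr
      have hk := hc1 r hrrs
      have hvpos : 0 < -(u' r) := hv r hrrs.1 (le_of_lt (lt_trans hrrs.2 hrsR))
      refine ⟨by linear_combination hk, mul_pos hrr.1 hvpos, ?_⟩
      nlinarith [hvb r hrrs, hrr.1]
    rcases lt_or_gt_of_ne hne with hneg | hpos
    · -- c1 < 0 : -ψ blows up
      have hD : (0:ℝ) < -c1/(2*C) := div_pos (by linarith) (by linarith)
      apply my_blowup_aux hb0 hD hpcont'.neg (fun r hrr => (hpd' r hrr).neg)
      intro r hrr
      obtain ⟨hk, hrv0, hvC⟩ := hcommon r hrr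
      have hNr : c1 + ψ r * (u' r + r * (lam+1) * u r) ≤ c1/2 := by
        have h3 := (abs_lt.mp (hNb r hrr)).2
        rw [abs_of_neg hneg] at h3
        linarith
      have hψ'eq : -(ψ' r) = -(c1 + ψ r * (u' r + r * (lam+1) * u r)) / (r * -(u' r)) := by
        rw [eq_div_iff (ne_of_gt hrv0)]
        linear_combination -hk
      rw [hψ'eq]
      calc (-c1/(2*C))/r^2 = (-c1/2) / (C * r^2) := by
            rw [div_div]
            ring_nf
        _ ≤ (-c1/2) / (r * -(u' r)) := div_le_div₀ (by linarith) le_rfl hrv0 hvC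
        _ ≤ (-(c1 + ψ r * (u' r + r * (lam+1) * u r))) / (r * -(u' r)) :=
            div_le_div₀ (by linarith) (by linarith) hrv0 le_rfl
    · -- c1 > 0 : ψ blows up
      have hD : (0:ℝ) < c1/(2*C) := div_pos hpos (by linarith)
      apply my_blowup_aux hb0 hD hpcont' hpd'
      intro r hrr
      obtain ⟨hk, hrv0, hvC⟩ := hcommon r hrr
      have hNr : c1/2 ≤ c1 + ψ r * (u' r + r * (lam+1) * u r) := by
        have h3 := (abs_lt.mp (hNb r hrr)).1
        rw [abs_of_pos hpos] at h3
        linarith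
      have hψ'eq : ψ' r = (c1 + ψ r * (u' r + r * (lam+1) * u r)) / (r * -(u' r)) := by
        rw [eq_div_iff (ne_of_gt hrv0)]
        linear_combination hk
      rw [hψ'eq]
      calc (c1/(2*C))/r^2 = (c1/2) / (C * r^2) := by
            rw [div_div]
            ring_nf
        _ ≤ (c1/2) / (r * -(u' r)) := div_le_div₀ (by linarith) le_rfl hrv0 hvC
        _ ≤ (c1 + ψ r * (u' r + r * (lam+1) * u r)) / (r * -(u' r)) :=
            div_le_div₀ (by linarith) (by linarith) hrv0 le_rfl
  -- proportionality on (0, rs]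
  have hprop : ∀ x ∈ Ioo (0:ℝ) rs, ∀ y ∈ Ioo (0:ℝ) rs, ψ x * -(u' y) = ψ y * -(u' x) := by
    have hφd : ∀ t ∈ Ioo (0:ℝ) rs, HasDerivAt (fun s => ψ s / -(u' s)) 0 t := by
      intro t ht
      have htR : t ∈ Ioo (0:ℝ) R := ⟨ht.1, lt_trans ht.2 hrsR⟩
      have ht0 : (0:ℝ) < t := ht.1
      have htne : t ≠ rs := ne_of_lt ht.2
      have hvne : -(u' t) ≠ 0 := ne_of_gt (hv t ht0 htR.2.le)
      have hu'ne : u' t ≠ 0 := fun h0 => hvne (by rw [h0, neg_zero])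
      have hG : HasDerivAt (fun s => s * u' s) (-(t * ((lam+1) * u t))) t := by
        have h0 := hu.ode t htR htne
        rwa [if_pos ht.2] at h0
      have hu'd : HasDerivAt u' ((-(t * ((lam+1) * u t)) * t - t * u' t * 1) / t ^ 2) t := by
        have h2 := hG.div (hasDerivAt_id t) (ne_of_gt ht0)
        exact h2.congr_of_eventuallyEq (eventuallyEq_of_mem (Ioi_mem_nhds ht0)
          (fun s hs => (mul_div_cancel_left₀ (u' s) (ne_of_gt hs)).symm))
      have hq := (hψ.deriv t htR htne).div hu'd.neg hvne
      refine hq.congr_deriv (Eq.symm ?_)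
      have hk := hc1 t ht
      rw [hc1zero] at hk
      rw [eq_comm, div_eq_zero_iff]
      left
      have htne0 : t ≠ 0 := ne_of_gt ht0
      simp only [Pi.neg_apply, Pi.add_apply, Pi.mul_apply, id_eq]; field_simp
      linear_combination hk
    intro x hx y hy
    have heq := my_const_of_deriv_zero hφd x hx y hy
    have hvx : -(u' x) ≠ 0 := ne_of_gt (hv x hx.1 (le_of_lt (lt_trans hx.2 hrsR)))
    have hvy : -(u' y) ≠ 0 := ne_of_gt (hv y hy.1 (le_of_lt (lt_trans hy.2 hrsR)))
    rw [div_eq_div_iff hvx hvy] at heq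
    exact heq
  have hproprs : ∀ x ∈ Ioo (0:ℝ) rs, ψ x * -(u' rs) = ψ rs * -(u' x) := by
    intro x hx
    have hFc : ContinuousAt (fun t => ψ x * -(u' t) - ψ t * -(u' x)) rs :=
      (continuousAt_const.mul (hu'cA rs hrsIoo).neg).sub ((hpcA rs hrsIoo).mul continuousAt_const)
    have hFtend : Tendsto (fun t => ψ x * -(u' t) - ψ t * -(u' x)) (𝓝[Iio rs] rs)
        (𝓝 (ψ x * -(u' rs) - ψ rs * -(u' x))) :=
      (hFc.tendsto).mono_left nhdsWithin_le_nhds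
    have hev : (fun t => ψ x * -(u' t) - ψ t * -(u' x)) =ᶠ[𝓝[Iio rs] rs] (fun _ => (0:ℝ)) := by
      filter_upwards [Ioo_mem_nhdsLT_of_mem (⟨hrs, le_rfl⟩ : rs ∈ Ioc (0:ℝ) rs)] with t ht
      have := hprop x hx t ht
      linarith
    have h0 : Tendsto (fun _ : ℝ => (0:ℝ)) (𝓝[Iio rs] rs)
        (𝓝 (ψ x * -(u' rs) - ψ rs * -(u' x))) := Tendsto.congr' hev hFtend
    have := tendsto_nhds_unique h0 tendsto_const_nhds
    linarith
  obtain ⟨α, hαdef⟩ : ∃ a : ℝ, a = ψ rs / -(u' rs) := ⟨_, rfl⟩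
  have hψα : ∀ x ∈ Ioc (0:ℝ) rs, ψ x = α * -(u' x) := by
    intro x hx
    rcases eq_or_lt_of_le hx.2 with h | h
    · rw [h, hαdef, div_mul_cancel₀ _ (ne_of_gt hvrs)]
    · have h2 := hproprs x ⟨hx.1, h⟩
      rw [hαdef, div_mul_eq_mul_div, eq_div_iff (ne_of_gt hvrs)]
      linarith [h2]
  -- one-sided derivatives
  have hNrs : (rs * -(u' rs)) ≠ 0 := ne_of_gt (mul_pos hrs hvrs)
  have hdm : dminus = ψ rs * (u' rs + rs * (lam+1) * u rs) / (rs * -(u' rs)) := by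
    have hLm : HasDerivWithinAt ψ
        (ψ rs * (u' rs + rs * (lam+1) * u rs) / (rs * -(u' rs))) (Iio rs) rs := by
      apply my_hasDerivWithinAt_left hrs (hψ.cont.mono (Icc_subset_Icc le_rfl hrsR.le))
        (fun t ht => hψ.deriv t ⟨ht.1, lt_trans ht.2 hrsR⟩ (ne_of_lt ht.2))
      have hca : ContinuousAt (fun r => ψ r * (u' r + r * (lam+1) * u r) / (r * -(u' r))) rs := by
        apply ContinuousAt.div
        · exact (hpcA rs hrsIoo).mul ((hu'cA rs hrsIoo).add
            ((continuousAt_id.mul continuousAt_const).mul (hucA rs hrsIoo)))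
        · exact continuousAt_id.mul (hu'cA rs hrsIoo).neg
        · exact hNrs
      have htd : Tendsto (fun r => ψ r * (u' r + r * (lam+1) * u r) / (r * -(u' r)))
          (𝓝[Ioo (0:ℝ) rs] rs)
          (𝓝 (ψ rs * (u' rs + rs * (lam+1) * u rs) / (rs * -(u' rs)))) :=
        (hca.tendsto).mono_left nhdsWithin_le_nhds
      apply Tendsto.congr' _ htd
      filter_upwards [self_mem_nhdsWithin] with r hrr
      have hk := hc1 r hrr
      rw [hc1zero] at hk
      have hrv : (0:ℝ) < r * -(u' r) :=
        mul_pos hrr.1 (hv r hrr.1 (le_of_lt (lt_trans hrr.2 hrsR)))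
      have h2 : ψ r * (u' r + r * (lam+1) * u r) = ψ' r * (r * -(u' r)) := by
        linear_combination -hk
      rw [h2, mul_div_assoc, div_self (ne_of_gt hrv), mul_one]
    rw [← hψ.jumpMinus.derivWithin (uniqueDiffWithinAt_Iio rs),
       hLm.derivWithin (uniqueDiffWithinAt_Iio rs)]
  have hdp : dplus = (c2 + ψ rs * (u' rs + rs * lam * u rs)) / (rs * -(u' rs)) := by
    have hLp : HasDerivWithinAt ψ
        ((c2 + ψ rs * (u' rs + rs * lam * u rs)) / (rs * -(u' rs))) (Ioi rs) rs := by
      apply my_hasDerivWithinAt_right hrsR (hψ.cont.mono (Icc_subset_Icc hrs.le le_rfl))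
        (fun t ht => hψ.deriv t ⟨lt_trans hrs ht.1, ht.2⟩ (ne_of_gt ht.1))
      have hca : ContinuousAt
          (fun r => (c2 + ψ r * (u' r + r * lam * u r)) / (r * -(u' r))) rs := by
        apply ContinuousAt.div
        · exact continuousAt_const.add ((hpcA rs hrsIoo).mul ((hu'cA rs hrsIoo).add
            ((continuousAt_id.mul continuousAt_const).mul (hucA rs hrsIoo))))
        · exact continuousAt_id.mul (hu'cA rs hrsIoo).neg
        · exact hNrs
      have htd : Tendsto (fun r => (c2 + ψ r * (u' r + r * lam * u r)) / (r * -(u' r)))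
          (𝓝[Ioo rs R] rs)
          (𝓝 ((c2 + ψ rs * (u' rs + rs * lam * u rs)) / (rs * -(u' rs)))) :=
        (hca.tendsto).mono_left nhdsWithin_le_nhds
      apply Tendsto.congr' _ htd
      filter_upwards [self_mem_nhdsWithin] with r hrr
      have hk := hc2 r hrr
      have hrv : (0:ℝ) < r * -(u' r) :=
        mul_pos (lt_trans hrs hrr.1) (hv r (lt_trans hrs hrr.1) hrr.2.le)
      have h2 : c2 + ψ r * (u' r + r * lam * u r) = ψ' r * (r * -(u' r)) := by
        linear_combination -hk
      rw [h2, mul_div_assoc, div_self (ne_of_gt hrv), mul_one]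
    rw [← hψ.jumpPlus.derivWithin (uniqueDiffWithinAt_Ioi rs),
       hLp.derivWithin (uniqueDiffWithinAt_Ioi rs)]
  -- value of c2
  have hc2val : c2 = rs * u rs * -(u' rs) * (α - 1) := by
    have hj := hψ.jump
    rw [hdm, hdp, div_sub_div_same, div_eq_iff hNrs] at hj
    have hav : α * -(u' rs) = ψ rs := by
      rw [hαdef, div_mul_cancel₀ _ (ne_of_gt hvrs)]
    linear_combination hj - rs * u rs * hav
  -- φ analysis on [rs, R]
  have hφcont : ContinuousOn (fun s => ψ s / -(u' s)) (Icc rs R) := by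
    apply ContinuousOn.div (hψ.cont.mono (Icc_subset_Icc hrs.le le_rfl))
      ((hu.derivCont.mono (Icc_subset_Icc hrs.le le_rfl)).neg)
    exact fun t ht => ne_of_gt (hv t (lt_of_lt_of_le hrs ht.1) ht.2)
  have hφd2 : ∀ t ∈ Ioo rs R, HasDerivAt (fun s => ψ s / -(u' s)) (c2 / (t * (u' t)^2)) t := by
    intro t ht
    have htR : t ∈ Ioo (0:ℝ) R := ⟨lt_trans hrs ht.1, ht.2⟩
    have ht0 : (0:ℝ) < t := htR.1
    have htne : t ≠ rs := ne_of_gt ht.1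
    have hvne : -(u' t) ≠ 0 := ne_of_gt (hv t ht0 htR.2.le)
    have hu'ne : u' t ≠ 0 := fun h0 => hvne (by rw [h0, neg_zero])
    have hG : HasDerivAt (fun s => s * u' s) (-(t * (lam * u t))) t := by
      have h0 := hu.ode t htR htne
      rw [if_neg (not_lt.mpr ht.1.le)] at h0
      convert h0 using 2
      ring
    have hu'd : HasDerivAt u' ((-(t * (lam * u t)) * t - t * u' t * 1) / t ^ 2) t := by
      have h2 := hG.div (hasDerivAt_id t) (ne_of_gt ht0)
      exact h2.congr_of_eventuallyEq (eventuallyEq_of_mem (Ioi_mem_nhds ht0)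
        (fun s hs => (mul_div_cancel_left₀ (u' s) (ne_of_gt hs)).symm))
    have hq := (hψ.deriv t htR htne).div hu'd.neg hvne
    refine hq.congr_deriv (Eq.symm ?_)
    have hk := hc2 t ht
    have htne0 : t ≠ 0 := ne_of_gt ht0
    simp only [Pi.neg_apply, Pi.add_apply, Pi.mul_apply, id_eq]; field_simp
    linear_combination -hk
  have hmono : ∀ x y, rs ≤ x → x < y → y ≤ R →
      ((c2 < 0 → ψ y / -(u' y) < ψ x / -(u' x)) ∧
       (0 ≤ c2 → ψ x / -(u' x) ≤ ψ y / -(u' y))) := by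
    intro x y hx hxy hyR
    obtain ⟨c, hcm, hcv⟩ := exists_hasDerivAt_eq_slope (fun s => ψ s / -(u' s))
      (fun s => c2 / (s * (u' s)^2)) hxy (hφcont.mono (Icc_subset_Icc hx hyR))
      (fun t htt => hφd2 t ⟨lt_of_le_of_lt hx htt.1, lt_of_lt_of_le htt.2 hyR⟩)
    have hc0 : 0 < c := lt_trans hrs (lt_of_le_of_lt hx hcm.1)
    have hu'c : u' c ≠ 0 := ne_of_lt (hu.derivNeg c ⟨hc0, le_trans hcm.2.le hyR⟩)
    have hden : 0 < c * (u' c)^2 := mul_pos hc0 (pow_two_pos_of_ne_zero hu'c)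
    have hyx : 0 < y - x := sub_pos.mpr hxy
    constructor
    · intro hc2neg
      have hneg : c2 / (c * (u' c)^2) < 0 := div_neg_of_neg_of_pos hc2neg hden
      rw [hcv] at hneg
      rcases div_neg_iff.mp hneg with ⟨_, h6⟩ | ⟨h5, _⟩
      · linarith
      · linarith
    · intro hc2nn
      have hnn : 0 ≤ c2 / (c * (u' c)^2) := div_nonneg hc2nn hden.le
      rw [hcv] at hnn
      rcases div_nonneg_iff.mp hnn with ⟨h5, _⟩ | ⟨_, h6⟩
      · linarith
      · linarith
  have hφR : ψ R / -(u' R) = 0 := by rw [hψ.valR]; exact zero_div _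
  have hαpos : 0 < α := by
    by_contra hle
    push_neg at hle
    have hK : 0 < rs * u rs * -(u' rs) := by positivity
    have hc2neg : c2 < 0 := by
      rw [hc2val]
      nlinarith
    have h2 := (hmono rs R le_rfl hrsR le_rfl).1 hc2neg
    rw [hφR] at h2
    rw [hαdef] at hle
    linarith
  -- conclusion
  intro r hr
  rcases lt_trichotomy r rs with h | h | h
  · have := hψα r ⟨hr.1, h.le⟩
    rw [this]
    exact mul_pos hαpos (hv r hr.1 (le_of_lt hr.2))
  · have := hψα r ⟨hr.1, h.le⟩
    rw [this]
    exact mul_pos hαpos (hv r hr.1 (le_of_lt hr.2))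
  · have hvr : 0 < -(u' r) := hv r hr.1 hr.2.le
    rcases lt_or_ge c2 0 with hc2n | hc2p
    · have h2 := (hmono r R h.le hr.2 le_rfl).1 hc2n
      rw [hφR] at h2
      rcases div_pos_iff.mp h2 with ⟨h3, _⟩ | ⟨_, h4⟩
      · exact h3
      · linarith
    · have h2 := (hmono rs r le_rfl h hr.2.le).2 hc2p
      have h3 : (0:ℝ) < ψ r / -(u' r) := by
        rw [hαdef] at hαpos
        calc (0:ℝ) < ψ rs / -(u' rs) := hαpos
          _ ≤ ψ r / -(u' r) := h2
      rcases div_pos_iff.mp h3 with ⟨h4, _⟩ | ⟨_, h5⟩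
      · exact h4
      · linarith

end
end

section
/- For every integer $k\ge2$ one has $\psi_k\le\psi_1$ on $[0,R]$; in particular $\psi_k(r^*)\le\psi_1(r^*)$, i.e. $\omega_k\ge\omega_1$ where $\omega_k:=-u_*'(r^*)-\psi_k(r^*)$. -/
open Set Filter Topology

noncomputable section

/-- Maximum principle: a continuous function `h` on `[0,R]`, vanishing at the
endpoints, differentiable away from the interface `rs`, whose one-sided
derivatives at `rs` jump downwards, and such that the operator
`-(1/r)(r h')' - (lam + χ) h` is (strictly) positive wherever `h < 0`,
must be nonnegative on `[0,R]`. -/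
lemma maxPrinciple (R rs lam : ℝ) (hR : 0 < R) (hrs : 0 < rs) (hrsR : rs < R)
    (u u' : ℝ → ℝ) (hu : EigenProfile R rs lam u u')
    (h h' F : ℝ → ℝ) (dp dm : ℝ)
    (hcont : ContinuousOn h (Icc 0 R))
    (hder : ∀ r ∈ Ioo (0:ℝ) R, r ≠ rs → HasDerivAt h (h' r) r)
    (hode : ∀ r ∈ Ioo (0:ℝ) R, r ≠ rs → HasDerivAt (fun s => s * h' s) (F r) r)
    (hp : HasDerivWithinAt h dp (Ioi rs) rs)
    (hm : HasDerivWithinAt h dm (Iio rs) rs)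
    (hjump : dp ≤ dm)
    (h0 : h 0 = 0) (hRv : h R = 0)
    (hsrc : ∀ r ∈ Ioo (0:ℝ) R, r ≠ rs → h r < 0 →
      u r * F r + r * (lam + (if r < rs then (1:ℝ) else 0)) * u r * h r < 0) :
    ∀ r ∈ Icc (0:ℝ) R, 0 ≤ h r := by
  set W : ℝ → ℝ := fun s => u s * (s * h' s) - h s * (s * u' s) with hWdef
  set vd : ℝ → ℝ := fun s => (h' s * u s - h s * u' s) / (u s) ^ 2 with hvddef
  set v : ℝ → ℝ := fun s => h s / u s with hvdef
  have upos : ∀ r ∈ Ico (0:ℝ) R, 0 < u r := hu.pos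
  have hune : ∀ r ∈ Ico (0:ℝ) R, u r ≠ 0 := fun r hr => ne_of_gt (upos r hr)
  have huder : ∀ r ∈ Ioo (0:ℝ) R, HasDerivAt u (u' r) r := fun r hr =>
    (hu.deriv r ⟨hr.1.le, hr.2.le⟩).hasDerivAt (Icc_mem_nhds hr.1 hr.2)
  have hWder : ∀ r ∈ Ioo (0:ℝ) R, r ≠ rs →
      HasDerivAt W (u r * F r + r * (lam + (if r < rs then (1:ℝ) else 0)) * u r * h r) r := by
    intro r hr hne
    have h1 := ((huder r hr).mul (hode r hr hne)).sub ((hder r hr hne).mul (hu.ode r hr hne))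
    rw [hWdef]
    convert h1 using 1
    · rfl
    · rfl
    · rfl
    ring
  have hvder : ∀ r ∈ Ioo (0:ℝ) R, r ≠ rs → HasDerivAt v (vd r) r := by
    intro r hr hne
    exact (hder r hr hne).div (huder r hr) (hune r ⟨hr.1.le, hr.2⟩)
  have hvdW : ∀ r ∈ Ioo (0:ℝ) R, vd r = W r / (r * (u r) ^ 2) := by
    intro r hr
    have hu0 : u r ≠ 0 := hune r ⟨hr.1.le, hr.2⟩
    have hr0 : r ≠ 0 := ne_of_gt hr.1
    rw [hvddef, hWdef]
    field_simp
  clear_value W vd v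
  by_contra hcon
  push_neg at hcon
  obtain ⟨c, hcmem, hc⟩ := hcon
  have hc0 : 0 < c := hcmem.1.lt_of_ne (fun heq => by
    rw [← heq, h0] at hc; exact lt_irrefl 0 hc)
  have hcR : c < R := hcmem.2.lt_of_ne (fun heq => by
    rw [heq, hRv] at hc; exact lt_irrefl 0 hc)
  -- construction of the component (a, b) of {h < 0} around c
  set A : Set ℝ := Icc 0 c ∩ h ⁻¹' {0} with hAdef
  have hAne : A.Nonempty := ⟨0, ⟨le_refl 0, hc0.le⟩, h0⟩
  have hAclosed : IsClosed A :=
    (hcont.mono (Icc_subset_Icc_right hcR.le)).preimage_isClosed_of_isClosed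
      isClosed_Icc isClosed_singleton
  have hAcomp : IsCompact A := isCompact_Icc.of_isClosed_subset hAclosed inter_subset_left
  set a := sSup A with hadef
  have haA : a ∈ A := hAcomp.sSup_mem hAne
  have ha0 : h a = 0 := haA.2
  have ha_nonneg : 0 ≤ a := haA.1.1
  have hac : a < c := lt_of_le_of_ne haA.1.2 (fun heq => by
    rw [heq] at ha0; rw [ha0] at hc; exact lt_irrefl 0 hc)
  set B : Set ℝ := Icc c R ∩ h ⁻¹' {0} with hBdef
  have hBne : B.Nonempty := ⟨R, ⟨hcR.le, le_refl R⟩, hRv⟩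
  have hBclosed : IsClosed B :=
    (hcont.mono (Icc_subset_Icc_left hc0.le)).preimage_isClosed_of_isClosed
      isClosed_Icc isClosed_singleton
  have hBcomp : IsCompact B := isCompact_Icc.of_isClosed_subset hBclosed inter_subset_left
  set b := sInf B with hbdef
  have hbB : b ∈ B := hBcomp.sInf_mem hBne
  have hb0 : h b = 0 := hbB.2
  have hbR : b ≤ R := hbB.1.2
  have hcb : c < b := lt_of_le_of_ne hbB.1.1 (fun heq => by
    rw [← heq] at hb0; rw [hb0] at hc; exact lt_irrefl 0 hc)
  have hab : a < b := lt_trans hac hcb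
  have hnegab : ∀ r ∈ Ioo a b, h r < 0 := by
    intro r hr
    have hr0 : 0 ≤ r := le_trans ha_nonneg hr.1.le
    have hrR : r ≤ R := le_trans hr.2.le hbR
    rcases lt_trichotomy (h r) 0 with h1 | h1 | h1
    · exact h1
    · exfalso
      rcases le_or_gt r c with hrc | hrc
      · have : r ≤ a := le_csSup hAcomp.bddAbove ⟨⟨hr0, hrc⟩, h1⟩
        exact absurd this (not_le.mpr hr.1)
      · have : b ≤ r := csInf_le hBcomp.bddBelow ⟨⟨hrc.le, hrR⟩, h1⟩
        exact absurd this (not_le.mpr hr.2)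
    · exfalso
      rcases le_or_gt r c with hrc | hrc
      · obtain ⟨z, hz, hz0⟩ := intermediate_value_Icc' hrc
          (hcont.mono (Icc_subset_Icc hr0 hcR.le)) ⟨hc.le, h1.le⟩
        have hzA : z ∈ A := ⟨⟨le_trans hr0 hz.1, hz.2⟩, hz0⟩
        have h2 : z ≤ a := le_csSup hAcomp.bddAbove hzA
        have h3 : a < z := lt_of_lt_of_le hr.1 hz.1
        linarith
      · obtain ⟨z, hz, hz0⟩ := intermediate_value_Icc hrc.le
          (hcont.mono (Icc_subset_Icc hc0.le hrR)) ⟨hc.le, h1.le⟩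
        have hzB : b ≤ z := csInf_le hBcomp.bddBelow ⟨⟨hz.1, le_trans hz.2 hrR⟩, hz0⟩
        have h3 : z < b := lt_of_le_of_lt hz.2 hr.2
        linarith
  clear_value a b
  have habsub : Ioo a b ⊆ Ioo 0 R := fun r hr =>
    ⟨lt_of_le_of_lt ha_nonneg hr.1, lt_of_lt_of_le hr.2 hbR⟩
  -- strict monotonicity of W on any good interval
  have T1 : ∀ x y : ℝ, x < y → (∀ r ∈ Icc x y, r ∈ Ioo (0:ℝ) R ∧ r ≠ rs ∧ h r < 0) →
      StrictAntiOn W (Icc x y) := by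
    intro x y hxy hcond
    apply strictAntiOn_of_deriv_neg (convex_Icc x y)
    · intro r hr
      exact ((hWder r (hcond r hr).1 (hcond r hr).2.1).continuousAt).continuousWithinAt
    · intro r hr
      rw [interior_Icc] at hr
      obtain ⟨h1, h2, h3⟩ := hcond r (Ioo_subset_Icc_self hr)
      rw [(hWder r h1 h2).deriv]
      exact hsrc r h1 h2 h3
  -- continuity of v on subintervals of [0, R)
  have hvcont : ∀ x y : ℝ, 0 ≤ x → y < R → ContinuousOn v (Icc x y) := by
    intro x y hx hy
    have hsub : Icc x y ⊆ Ico 0 R := fun r hr =>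
      ⟨le_trans hx hr.1, lt_of_le_of_lt hr.2 hy⟩
    simp only [hvdef]
    exact (hcont.mono (hsub.trans Ico_subset_Icc_self)).div
      (hu.cont.mono (hsub.trans Ico_subset_Icc_self)) (fun r hr => hune r (hsub hr))
  have TvMono : ∀ x y : ℝ, 0 ≤ x → y < R →
      (∀ r ∈ Ioo x y, r ∈ Ioo (0:ℝ) R ∧ r ≠ rs ∧ 0 < W r) → StrictMonoOn v (Icc x y) := by
    intro x y hx hy hcond
    apply strictMonoOn_of_deriv_pos (convex_Icc x y) (hvcont x y hx hy)
    intro r hr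
    rw [interior_Icc] at hr
    obtain ⟨h1, h2, h3⟩ := hcond r hr
    rw [(hvder r h1 h2).deriv, hvdW r h1]
    exact div_pos h3 (mul_pos h1.1 (pow_pos (upos r ⟨h1.1.le, h1.2⟩) 2))
  have TvAnti : ∀ x y : ℝ, 0 ≤ x → y < R →
      (∀ r ∈ Ioo x y, r ∈ Ioo (0:ℝ) R ∧ r ≠ rs ∧ W r < 0) → StrictAntiOn v (Icc x y) := by
    intro x y hx hy hcond
    apply strictAntiOn_of_deriv_neg (convex_Icc x y) (hvcont x y hx hy)
    intro r hr
    rw [interior_Icc] at hr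
    obtain ⟨h1, h2, h3⟩ := hcond r hr
    rw [(hvder r h1 h2).deriv, hvdW r h1]
    exact div_neg_of_neg_of_pos h3 (mul_pos h1.1 (pow_pos (upos r ⟨h1.1.le, h1.2⟩) 2))
  have hva : v a = 0 := by rw [hvdef]; simp [ha0]
  have hvb : v b = 0 := by rw [hvdef]; simp [hb0]
  have hvltz : ∀ r, r ∈ Ioo a b → r < R → v r < 0 := by
    intro r hr hrR
    simp only [hvdef]
    exact div_neg_of_neg_of_pos (hnegab r hr) (upos r ⟨le_trans ha_nonneg hr.1.le, hrR⟩)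
  -- anchored negativity of W
  have Hanchor : ∀ ξ, ξ ∈ Ioo a b → (∀ r ∈ Ioc a ξ, r ≠ rs) → W ξ < 0 := by
    intro ξ hξ hrsfree
    by_contra hWξ
    push_neg at hWξ
    have hξR : ξ < R := lt_of_lt_of_le hξ.2 hbR
    have hWpos : ∀ r ∈ Ioo a ξ, 0 < W r := by
      intro r hr
      have hsub : ∀ s ∈ Icc r ξ, s ∈ Ioo (0:ℝ) R ∧ s ≠ rs ∧ h s < 0 := by
        intro s hs
        have hsab : s ∈ Ioo a b := ⟨lt_of_lt_of_le hr.1 hs.1, lt_of_le_of_lt hs.2 hξ.2⟩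
        exact ⟨habsub hsab, hrsfree s ⟨hsab.1, hs.2⟩, hnegab s hsab⟩
      have := T1 r ξ hr.2 hsub ⟨le_refl r, hr.2.le⟩ ⟨hr.2.le, le_refl ξ⟩ hr.2
      linarith
    have hmono := TvMono a ξ ha_nonneg hξR (fun r hr =>
      ⟨habsub ⟨hr.1, lt_trans hr.2 hξ.2⟩, hrsfree r ⟨hr.1, hr.2.le⟩, hWpos r hr⟩)
    have h1 : v a < v ξ := hmono ⟨le_refl a, hξ.1.le⟩ ⟨hξ.1.le, le_refl ξ⟩ hξ.1
    have h2 : v ξ < 0 := hvltz ξ hξ hξR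
    rw [hva] at h1
    linarith
  -- the endgame near R when b = R
  have Hend : b = R → ∀ r₁, r₁ ∈ Ioo a R → W r₁ < 0 →
      (∀ r ∈ Ico r₁ R, r ≠ rs) → False := by
    intro hbR' r₁ hr₁ hWr₁ hfree
    obtain ⟨Mu', hMu'⟩ := isCompact_Icc.exists_bound_of_continuousOn hu.derivCont
    set M := max Mu' 1 with hMdef
    have hMpos : (0:ℝ) < M := lt_of_lt_of_le one_pos (le_max_right _ _)
    have hM : ∀ x ∈ Icc (0:ℝ) R, |u' x| ≤ M := fun x hx => by
      have := hMu' x hx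
      rw [Real.norm_eq_abs] at this
      exact le_trans this (le_max_left _ _)
    set ε := -W r₁ with hεdef
    have hεpos : 0 < ε := by rw [hεdef]; linarith
    set δ := ε / (2 * (R * M)) with hδdef
    have hδpos : 0 < δ := by
      rw [hδdef]; positivity
    have htend : Filter.Tendsto h (𝓝[<] R) (𝓝 0) := by
      have h1 : ContinuousWithinAt h (Icc 0 R) R := hcont R (right_mem_Icc.mpr hR.le)
      have h2 := h1.tendsto
      rw [hRv] at h2
      have h3 : Filter.Tendsto h (𝓝[Ico 0 R] R) (𝓝 0) :=
        h2.mono_left (nhdsWithin_mono R Ico_subset_Icc_self)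
      rwa [nhdsWithin_Ico_eq_nhdsLT hR] at h3
    have hsmall : {r | |h r| < δ} ∈ 𝓝[<] R := by
      filter_upwards [htend (Metric.ball_mem_nhds (0:ℝ) hδpos)] with r hr
      simpa [Real.dist_eq] using hr
    obtain ⟨l, hl, hlsub⟩ := mem_nhdsLT_iff_exists_Ioo_subset.mp hsmall
    set l' := max l r₁ with hl'def
    have hl'R : l' < R := max_lt hl hr₁.2
    set r₂ := (l' + R) / 2 with hr₂def
    have hr₂1 : l' < r₂ := by rw [hr₂def]; linarith
    have hr₂2 : r₂ < R := by rw [hr₂def]; linarith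
    have hll' : l ≤ l' := le_max_left _ _
    have hr₁r₂ : r₁ < r₂ := lt_of_le_of_lt (le_max_right l r₁) hr₂1
    have har₂ : a < r₂ := lt_trans hr₁.1 hr₁r₂
    have hr₂pos : 0 < r₂ := lt_of_le_of_lt ha_nonneg har₂
    clear_value M ε δ l' r₂
    -- derivative of h is negative on (r₂, R)
    have hh'neg : ∀ r ∈ Ioo r₂ R, h' r < 0 := by
      intro r hr
      have hrIoo : r ∈ Ioo (0:ℝ) R := ⟨lt_trans hr₂pos hr.1, hr.2⟩
      have hrne : r ≠ rs := hfree r ⟨le_of_lt (lt_of_lt_of_le hr₁r₂ hr.1.le), hr.2⟩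
      have hrab : r ∈ Ioo a b := ⟨lt_trans har₂ hr.1, by rw [hbR']; exact hr.2⟩
      have hb1 : |h r| < δ := hlsub ⟨lt_of_le_of_lt hll' (lt_trans hr₂1 hr.1), hr.2⟩
      have hWr : W r < W r₁ := by
        have hsub : ∀ s ∈ Icc r₁ r, s ∈ Ioo (0:ℝ) R ∧ s ≠ rs ∧ h s < 0 := by
          intro s hs
          have hsR : s < R := lt_of_le_of_lt hs.2 hr.2
          have hsab : s ∈ Ioo a b := ⟨lt_of_lt_of_le hr₁.1 hs.1, by rw [hbR']; exact hsR⟩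
          exact ⟨habsub hsab, hfree s ⟨hs.1, hsR⟩, hnegab s hsab⟩
        exact T1 r₁ r (lt_trans hr₁r₂ hr.1) hsub ⟨le_refl r₁, (lt_trans hr₁r₂ hr.1).le⟩
          ⟨(lt_trans hr₁r₂ hr.1).le, le_refl r⟩ (lt_trans hr₁r₂ hr.1)
      have hWr' : W r ≤ -ε := by rw [hεdef]; linarith
      have habs : h r * (r * u' r) ≤ δ * (R * M) := by
        calc h r * (r * u' r) ≤ |h r * (r * u' r)| := le_abs_self _
          _ = |h r| * (|r| * |u' r|) := by rw [abs_mul, abs_mul]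
          _ ≤ δ * (R * M) := by
              apply mul_le_mul hb1.le _ (mul_nonneg (abs_nonneg r) (abs_nonneg _)) hδpos.le
              apply mul_le_mul _ (hM r ⟨hrIoo.1.le, hr.2.le⟩) (abs_nonneg _) hR.le
              rw [abs_of_nonneg hrIoo.1.le]; exact hr.2.le
      have hδRM : δ * (R * M) = ε / 2 := by
        rw [hδdef]
        field_simp
      have hWeq : u r * (r * h' r) = W r + h r * (r * u' r) := by
        rw [hWdef]; ring
      have hkey : u r * (r * h' r) < 0 := by
        rw [hδRM] at habs
        rw [hWeq]
        exact lt_of_le_of_lt (add_le_add hWr' habs) (by linarith)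
      by_contra hge
      push_neg at hge
      have : 0 ≤ u r * (r * h' r) :=
        mul_nonneg (upos r ⟨hrIoo.1.le, hr.2⟩).le (mul_nonneg hrIoo.1.le hge)
      linarith
    have hanti : StrictAntiOn h (Icc r₂ R) := by
      apply strictAntiOn_of_deriv_neg (convex_Icc r₂ R)
        (hcont.mono (Icc_subset_Icc hr₂pos.le (le_refl R)))
      intro r hr
      rw [interior_Icc] at hr
      have hrIoo : r ∈ Ioo (0:ℝ) R := ⟨lt_trans hr₂pos hr.1, hr.2⟩
      have hrne : r ≠ rs := hfree r ⟨le_of_lt (lt_of_lt_of_le hr₁r₂ hr.1.le), hr.2⟩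
      rw [(hder r hrIoo hrne).deriv]
      exact hh'neg r hr
    have h1 : h R < h r₂ :=
      hanti ⟨le_refl r₂, hr₂2.le⟩ ⟨hr₂2.le, le_refl R⟩ hr₂2
    have h2 : h r₂ < 0 := hnegab r₂ ⟨har₂, by rw [hbR']; exact hr₂2⟩
    rw [hRv] at h1
    linarith
  -- main case split on the location of rs
  by_cases hrsmem : rs ∈ Ioo a b
  · -- Case II : a < rs < b
    have hWnegL : ∀ η ∈ Ioo a rs, W η < 0 := fun η hη =>
      Hanchor η ⟨hη.1, lt_trans hη.2 hrsmem.2⟩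
        (fun r hr => ne_of_lt (lt_of_le_of_lt hr.2 hη.2))
    by_cases hex : ∃ ξ ∈ Ioo rs b, 0 ≤ W ξ
    · obtain ⟨ξ, hξ, hWξ⟩ := hex
      have hξR : ξ < R := lt_of_lt_of_le hξ.2 hbR
      set σ := (rs + ξ) / 2 with hσdef
      have hσ1 : rs < σ := by rw [hσdef]; linarith [hξ.1]
      have hσ2 : σ < ξ := by rw [hσdef]; linarith [hξ.1]
      have hσR : σ < R := lt_trans hσ2 hξR
      have hrssub : ∀ x y : ℝ, rs < x → y < b → ∀ s ∈ Icc x y,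
          s ∈ Ioo (0:ℝ) R ∧ s ≠ rs ∧ h s < 0 := by
        intro x y hx hy s hs
        have hs1 : rs < s := lt_of_lt_of_le hx hs.1
        have hsab : s ∈ Ioo a b := ⟨lt_trans hrsmem.1 hs1, lt_of_le_of_lt hs.2 hy⟩
        exact ⟨habsub hsab, ne_of_gt hs1, hnegab s hsab⟩
      have hWσ : 0 < W σ := by
        have := T1 σ ξ hσ2 (hrssub σ ξ hσ1 hξ.2) ⟨le_refl σ, hσ2.le⟩
          ⟨hσ2.le, le_refl ξ⟩ hσ2
        linarith
      obtain ⟨Mu, hMu'⟩ := isCompact_Icc.exists_bound_of_continuousOn hu.cont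
      have hMu : ∀ x ∈ Icc (0:ℝ) R, |u x| ≤ Mu := fun x hx => by
        have := hMu' x hx; rwa [Real.norm_eq_abs] at this
      have hMupos : 0 < Mu :=
        lt_of_lt_of_le (upos 0 ⟨le_refl 0, hR⟩)
          (le_trans (le_abs_self _) (hMu 0 ⟨le_refl 0, hR.le⟩))
      set c₀ := W σ / (R * Mu ^ 2) with hc₀def
      have hc₀pos : 0 < c₀ := by rw [hc₀def]; positivity
      clear_value σ c₀
      have hvdlb : ∀ r ∈ Ioo rs σ, c₀ ≤ vd r := by
        intro r hr
        have hrIoo : r ∈ Ioo (0:ℝ) R := ⟨lt_trans hrs hr.1, lt_trans hr.2 hσR⟩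
        have hWmid : W σ < W r := T1 r σ hr.2
          (hrssub r σ hr.1 (lt_trans hσ2 hξ.2))
          ⟨le_refl r, hr.2.le⟩ ⟨hr.2.le, le_refl σ⟩ hr.2
        rw [hvdW r hrIoo, hc₀def]
        apply div_le_div₀ (le_of_lt (lt_trans hWσ hWmid)) (le_of_lt hWmid)
          (mul_pos hrIoo.1 (pow_pos (upos r ⟨hrIoo.1.le, hrIoo.2⟩) 2))
        apply mul_le_mul hrIoo.2.le _ (pow_nonneg (upos r ⟨hrIoo.1.le, hrIoo.2⟩).le 2) hR.le
        have h1 : |u r| ≤ Mu := hMu r ⟨hrIoo.1.le, hrIoo.2.le⟩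
        calc (u r) ^ 2 = |u r| ^ 2 := (sq_abs _).symm
          _ ≤ Mu ^ 2 := by
            apply pow_le_pow_left₀ (abs_nonneg _) h1
      -- one-sided derivatives of v at rs
      have hurs : u rs ≠ 0 := hune rs ⟨hrs.le, hrsR⟩
      have hursIoo : rs ∈ Ioo (0:ℝ) R := ⟨hrs, hrsR⟩
      have hudrs := huder rs hursIoo
      have hvp : HasDerivWithinAt v ((dp * u rs - h rs * u' rs) / (u rs) ^ 2) (Ioi rs) rs := by
        simp only [hvdef]
        exact hp.div hudrs.hasDerivWithinAt hurs
      have hvm : HasDerivWithinAt v ((dm * u rs - h rs * u' rs) / (u rs) ^ 2) (Iio rs) rs := by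
        simp only [hvdef]
        exact hm.div hudrs.hasDerivWithinAt hurs
      -- lower bound on the right slope
      have hslopeP : ∀ r ∈ Ioo rs σ, c₀ ≤ slope v rs r := by
        intro r hr
        have hrR : r < R := lt_trans hr.2 hσR
        obtain ⟨ζ, hζ, hζeq⟩ := exists_hasDerivAt_eq_slope v vd hr.1
          (hvcont rs r hrs.le hrR)
          (fun x hx => hvder x ⟨lt_trans hrs hx.1, lt_trans hx.2 hrR⟩ (ne_of_gt hx.1))
        rw [slope_def_field, ← hζeq]
        exact hvdlb ζ ⟨hζ.1, lt_trans hζ.2 hr.2⟩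
      have hIoidiff : Ioi rs \ {rs} = Ioi rs :=
        diff_singleton_eq_self (fun hmem => lt_irrefl rs hmem)
      have hvpge : c₀ ≤ (dp * u rs - h rs * u' rs) / (u rs) ^ 2 := by
        have htendsto := hasDerivWithinAt_iff_tendsto_slope.mp hvp
        rw [hIoidiff] at htendsto
        refine ge_of_tendsto htendsto ?_
        filter_upwards [Ioo_mem_nhdsGT hσ1] with r hr
        exact hslopeP r hr
      -- upper bound on the left slope
      have hslopeM : ∀ r ∈ Ioo a rs, slope v rs r ≤ 0 := by
        intro r hr
        have hr0 : 0 ≤ r := le_trans ha_nonneg hr.1.le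
        rw [slope_comm]
        obtain ⟨ζ, hζ, hζeq⟩ := exists_hasDerivAt_eq_slope v vd hr.2
          (hvcont r rs hr0 hrsR)
          (fun x hx => hvder x ⟨lt_of_le_of_lt hr0 hx.1, lt_trans hx.2 hrsR⟩ (ne_of_lt hx.2))
        rw [slope_def_field, ← hζeq]
        have hζIoo : ζ ∈ Ioo (0:ℝ) R := ⟨lt_of_le_of_lt hr0 hζ.1, lt_trans hζ.2 hrsR⟩
        rw [hvdW ζ hζIoo]
        exact le_of_lt (div_neg_of_neg_of_pos (hWnegL ζ ⟨lt_trans hr.1 hζ.1, hζ.2⟩)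
          (mul_pos hζIoo.1 (pow_pos (upos ζ ⟨hζIoo.1.le, hζIoo.2⟩) 2)))
      have hIiodiff : Iio rs \ {rs} = Iio rs :=
        diff_singleton_eq_self (fun hmem => lt_irrefl rs hmem)
      have hvmle : (dm * u rs - h rs * u' rs) / (u rs) ^ 2 ≤ 0 := by
        have htendsto := hasDerivWithinAt_iff_tendsto_slope.mp hvm
        rw [hIiodiff] at htendsto
        refine le_of_tendsto htendsto ?_
        filter_upwards [Ioo_mem_nhdsLT hrsmem.1] with r hr
        exact hslopeM r hr
      -- combine
      have hvpvm : (dp * u rs - h rs * u' rs) / (u rs) ^ 2 ≤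
          (dm * u rs - h rs * u' rs) / (u rs) ^ 2 := by
        have hnum : dp * u rs ≤ dm * u rs :=
          mul_le_mul_of_nonneg_right hjump (upos rs ⟨hrs.le, hrsR⟩).le
        have hden : (0:ℝ) < (u rs) ^ 2 := pow_pos (upos rs ⟨hrs.le, hrsR⟩) 2
        exact (div_le_div_iff_of_pos_right hden).mpr (by linarith)
      linarith
    · -- R1 : W < 0 on (rs, b)
      push_neg at hex
      rcases hbR.lt_or_eq with hbR' | hbR'
      · have hanti := TvAnti rs b hrs.le hbR' (fun r hr =>
          ⟨⟨lt_trans hrs hr.1, lt_trans hr.2 hbR'⟩, ne_of_gt hr.1, hex r hr⟩)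
        have h1 : v b < v rs :=
          hanti ⟨le_refl rs, hrsmem.2.le⟩ ⟨hrsmem.2.le, le_refl b⟩ hrsmem.2
        have h2 : v rs < 0 := hvltz rs hrsmem hrsR
        rw [hvb] at h1
        linarith
      · set r₁ := (rs + R) / 2 with hr₁def
        have hr₁1 : rs < r₁ := by rw [hr₁def]; linarith
        have hr₁2 : r₁ < R := by rw [hr₁def]; linarith
        exact Hend hbR' r₁ ⟨lt_trans hrsmem.1 hr₁1, hr₁2⟩
          (hex r₁ ⟨hr₁1, by rw [hbR']; exact hr₁2⟩)
          (fun r hr => ne_of_gt (lt_of_lt_of_le hr₁1 hr.1))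
  · -- Case I : rs ∉ (a, b)
    have hfree : ∀ r ∈ Ioo a b, r ≠ rs := fun r hr heq => hrsmem (heq ▸ hr)
    have hWneg : ∀ ξ ∈ Ioo a b, W ξ < 0 := fun ξ hξ =>
      Hanchor ξ hξ (fun r hr => hfree r ⟨hr.1, lt_of_le_of_lt hr.2 hξ.2⟩)
    rcases hbR.lt_or_eq with hbR' | hbR'
    · have hanti := TvAnti a b ha_nonneg hbR' (fun r hr =>
        ⟨habsub hr, hfree r hr, hWneg r hr⟩)
      have h1 : v b < v a :=
        hanti ⟨le_refl a, hab.le⟩ ⟨hab.le, le_refl b⟩ hab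
      rw [hva, hvb] at h1
      exact lt_irrefl 0 h1
    · set r₁ := (a + b) / 2 with hr₁def
      have hr₁ : r₁ ∈ Ioo a b := ⟨by rw [hr₁def]; linarith, by rw [hr₁def]; linarith⟩
      exact Hend hbR' r₁ ⟨hr₁.1, by rw [← hbR']; exact hr₁.2⟩ (hWneg r₁ hr₁)
        (fun r hr heq => hrsmem ⟨lt_of_lt_of_le hr₁.1 (heq ▸ hr.1),
          by rw [hbR']; exact heq ▸ hr.2⟩)


/-- Any profile `ψ_k` (for `k ≥ 1`) is nonnegative on `[0,R]`. -/
lemma psi_nonneg (R rs lam : ℝ) (hR : 0 < R) (hrs : 0 < rs) (hrsR : rs < R)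
    (u u' : ℝ → ℝ) (hu : EigenProfile R rs lam u u')
    (k : ℕ) (hk : 1 ≤ k) (ψ ψ' : ℝ → ℝ) (dpk dmk : ℝ)
    (hψ : PsiProfile R rs lam u k ψ ψ' dpk dmk) :
    ∀ r ∈ Icc (0:ℝ) R, 0 ≤ ψ r := by
  have hkR : (1:ℝ) ≤ (k:ℝ) := by exact_mod_cast hk
  apply maxPrinciple R rs lam hR hrs hrsR u u' hu ψ ψ'
    (fun r => -(r * ((lam + (if r < rs then (1:ℝ) else 0) - (k : ℝ) ^ 2 / r ^ 2) * ψ r)))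
    dpk dmk hψ.cont hψ.deriv hψ.ode hψ.jumpPlus hψ.jumpMinus ?_ hψ.val0 hψ.valR ?_
  · have h1 : dpk - dmk = -(u rs) := hψ.jump
    have h2 : 0 < u rs := hu.pos rs ⟨hrs.le, hrsR⟩
    linarith
  · intro r hr hne hneg
    have hr0 : (0:ℝ) < r := hr.1
    have hupos : 0 < u r := hu.pos r ⟨hr.1.le, hr.2⟩
    have heq : u r * (-(r * ((lam + (if r < rs then (1:ℝ) else 0) - (k : ℝ) ^ 2 / r ^ 2) * ψ r)))
        + r * (lam + (if r < rs then (1:ℝ) else 0)) * u r * ψ r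
        = (k : ℝ) ^ 2 / r * (u r * ψ r) := by
      field_simp
      ring
    rw [heq]
    apply mul_neg_of_pos_of_neg
    · apply div_pos (by positivity) hr0
    · exact mul_neg_of_pos_of_neg hupos hneg

/-- for every integer `k ≥ 2` one has `ψ_k ≤ ψ₁` on `[0,R]`;
in particular `ψ_k(r*) ≤ ψ₁(r*)`, i.e. `ω_k ≥ ω₁` where `ω_k = -u'(r*) - ψ_k(r*)`. -/
theorem psi_k_le_psi_one
    (R rs lam : ℝ) (hR : 0 < R) (hrs : 0 < rs) (hrsR : rs < R)
    (u u' : ℝ → ℝ) (hu : EigenProfile R rs lam u u')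
    (ψ₁ ψ₁' : ℝ → ℝ) (dp₁ dm₁ : ℝ)
    (hψ₁ : PsiProfile R rs lam u 1 ψ₁ ψ₁' dp₁ dm₁)
    (k : ℕ) (hk : 2 ≤ k)
    (ψk ψk' : ℝ → ℝ) (dpk dmk : ℝ)
    (hψk : PsiProfile R rs lam u k ψk ψk' dpk dmk) :
    (∀ r ∈ Icc (0 : ℝ) R, ψk r ≤ ψ₁ r) ∧
    (-(u' rs) - ψ₁ rs ≤ -(u' rs) - ψk rs) := by
  have hψknn := psi_nonneg R rs lam hR hrs hrsR u u' hu k (le_trans one_le_two hk)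
    ψk ψk' dpk dmk hψk
  have hkR : (2:ℝ) ≤ (k:ℝ) := by exact_mod_cast hk
  have hk2 : (1:ℝ) ≤ (k:ℝ) ^ 2 := by nlinarith
  have main : ∀ r ∈ Icc (0:ℝ) R, 0 ≤ ψ₁ r - ψk r := by
    apply maxPrinciple R rs lam hR hrs hrsR u u' hu
      (fun r => ψ₁ r - ψk r) (fun r => ψ₁' r - ψk' r)
      (fun r => -(r * ((lam + (if r < rs then (1:ℝ) else 0) - ((1:ℕ) : ℝ) ^ 2 / r ^ 2) * ψ₁ r))
        - -(r * ((lam + (if r < rs then (1:ℝ) else 0) - (k : ℝ) ^ 2 / r ^ 2) * ψk r)))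
      (dp₁ - dpk) (dm₁ - dmk)
      (hψ₁.cont.sub hψk.cont)
      (fun r hr hne => (hψ₁.deriv r hr hne).sub (hψk.deriv r hr hne))
      (fun r hr hne => by
        have h1 := (hψ₁.ode r hr hne).sub (hψk.ode r hr hne)
        have h2 : (fun s => s * ψ₁' s - s * ψk' s) = (fun s => s * (ψ₁' s - ψk' s)) := by
          funext s; ring
        rw [← h2]; exact h1)
      (hψ₁.jumpPlus.sub hψk.jumpPlus)
      (hψ₁.jumpMinus.sub hψk.jumpMinus)
      (by
        have h1 : dp₁ - dm₁ = -(u rs) := hψ₁.jump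
        have h2 : dpk - dmk = -(u rs) := hψk.jump
        linarith)
      (by show ψ₁ 0 - ψk 0 = 0; rw [hψ₁.val0, hψk.val0]; ring)
      (by show ψ₁ R - ψk R = 0; rw [hψ₁.valR, hψk.valR]; ring)
      ?_
    intro r hr hne hneg
    have hr0 : (0:ℝ) < r := hr.1
    have hupos : 0 < u r := hu.pos r ⟨hr.1.le, hr.2⟩
    have hψk0 : 0 ≤ ψk r := hψknn r ⟨hr.1.le, hr.2.le⟩
    have heq : u r * (-(r * ((lam + (if r < rs then (1:ℝ) else 0) - ((1:ℕ) : ℝ) ^ 2 / r ^ 2) * ψ₁ r))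
          - -(r * ((lam + (if r < rs then (1:ℝ) else 0) - (k : ℝ) ^ 2 / r ^ 2) * ψk r)))
        + r * (lam + (if r < rs then (1:ℝ) else 0)) * u r * (ψ₁ r - ψk r)
        = 1 / r * (u r * (ψ₁ r - (k : ℝ) ^ 2 * ψk r)) := by
      push_cast
      field_simp
      ring
    have hneg' : ψ₁ r - ψk r < 0 := hneg
    rw [heq]
    apply mul_neg_of_pos_of_neg (by positivity)
    apply mul_neg_of_pos_of_neg hupos
    nlinarith [mul_nonneg (sub_nonneg.mpr hk2) hψk0]
  constructor
  · intro r hr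
    have := main r hr
    linarith
  · have := main rs ⟨hrs.le, hrsR.le⟩
    linarith

end
end

section
/- One has $\omega_1>0$, where $\omega_1:=-u_*'(r^*)-\psi_1(r^*)$; equivalently, $\psi_1(r^*)<-u_*'(r^*)$. -/
open Set

noncomputable section

open Filter Topology

private lemma monoIcc {f : ℝ → ℝ} {a b : ℝ} (hab : a ≤ b)
    (hcont : ContinuousOn f (Icc a b))
    (hd : ∀ x ∈ Ioo a b, ∃ d, HasDerivAt f d x ∧ 0 ≤ d) :
    f a ≤ f b := by
  have H := monotoneOn_of_deriv_nonneg (convex_Icc a b) hcont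
    (fun x hx => by
      rw [interior_Icc] at hx
      obtain ⟨d, hdd, _⟩ := hd x hx
      exact hdd.differentiableAt.differentiableWithinAt)
    (fun x hx => by
      rw [interior_Icc] at hx
      obtain ⟨d, hdd, h0⟩ := hd x hx
      rw [hdd.deriv]; exact h0)
  exact H (left_mem_Icc.2 hab) (right_mem_Icc.2 hab) hab

private lemma constIcc {f : ℝ → ℝ} {a b : ℝ} (hab : a ≤ b)
    (hd : ∀ x ∈ Icc a b, HasDerivAt f 0 x) : f a = f b := by
  have hc : ContinuousOn f (Icc a b) :=
    fun x hx => (hd x hx).continuousAt.continuousWithinAt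
  have h1 := monoIcc hab hc
    (fun x hx => ⟨0, hd x (Ioo_subset_Icc_self hx), le_rfl⟩)
  have h2 := monoIcc hab hc.neg
    (fun x hx => ⟨-0, (hd x (Ioo_subset_Icc_self hx)).neg, by norm_num⟩)
  simp only [Pi.neg_apply, neg_le_neg_iff] at h2
  linarith

private lemma slope_tendsto_right {f f' : ℝ → ℝ} {a b e : ℝ} (hab : a < b)
    (hcont : ContinuousOn f (Icc a b))
    (hd : ∀ x ∈ Ioo a b, HasDerivAt f (f' x) x)
    (hlim : Tendsto f' (𝓝[>] a) (𝓝 e)) :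
    Tendsto (fun x => (f x - f a) / (x - a)) (𝓝[>] a) (𝓝 e) := by
  rw [Metric.tendsto_nhdsWithin_nhds] at hlim ⊢
  intro ε hε
  obtain ⟨δ, hδ, hδ'⟩ := hlim ε hε
  refine ⟨min δ (b - a), by simp [hδ, hab, sub_pos], ?_⟩
  intro x hx hdist
  have hxa : a < x := hx
  have hdist' : |x - a| < min δ (b - a) := by simpa [Real.dist_eq] using hdist
  rw [abs_of_pos (by linarith)] at hdist'
  have hxb : x < b := by
    have := lt_of_lt_of_le hdist' (min_le_right _ _); linarith
  have hxδ : x - a < δ := lt_of_lt_of_le hdist' (min_le_left _ _)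
  obtain ⟨c, hc, hceq⟩ := exists_hasDerivAt_eq_slope f f' hxa
    (hcont.mono (Icc_subset_Icc le_rfl hxb.le))
    (fun y hy => hd y ⟨hy.1, hy.2.trans hxb⟩)
  rw [← hceq]
  apply hδ' hc.1
  rw [Real.dist_eq, abs_of_pos (by linarith [hc.1, hc.2] : (0:ℝ) < c - a)]
  linarith [hc.2]

private lemma slope_tendsto_left {f f' : ℝ → ℝ} {a b e : ℝ} (hab : a < b)
    (hcont : ContinuousOn f (Icc a b))
    (hd : ∀ x ∈ Ioo a b, HasDerivAt f (f' x) x)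
    (hlim : Tendsto f' (𝓝[<] b) (𝓝 e)) :
    Tendsto (fun x => (f x - f b) / (x - b)) (𝓝[<] b) (𝓝 e) := by
  rw [Metric.tendsto_nhdsWithin_nhds] at hlim ⊢
  intro ε hε
  obtain ⟨δ, hδ, hδ'⟩ := hlim ε hε
  refine ⟨min δ (b - a), by simp [hδ, hab, sub_pos], ?_⟩
  intro x hx hdist
  have hxb : x < b := hx
  have hdist' : |x - b| < min δ (b - a) := by simpa [Real.dist_eq] using hdist
  rw [abs_of_neg (by linarith), neg_sub] at hdist'
  have hxa : a < x := by
    have := lt_of_lt_of_le hdist' (min_le_right _ _); linarith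
  have hxδ : b - x < δ := lt_of_lt_of_le hdist' (min_le_left _ _)
  obtain ⟨c, hc, hceq⟩ := exists_hasDerivAt_eq_slope f f' hxb
    (hcont.mono (Icc_subset_Icc hxa.le le_rfl))
    (fun y hy => hd y ⟨hxa.trans hy.1, hy.2⟩)
  have heq : (f x - f b) / (x - b) = f' c := by
    rw [hceq, ← neg_sub (f b) (f x), ← neg_sub b x, neg_div_neg_eq]
  rw [heq]
  apply hδ' hc.2
  rw [Real.dist_eq, abs_of_neg (by linarith [hc.2] : c - b < 0), neg_sub]
  linarith [hc.1]

private lemma no_blowup {f f' : ℝ → ℝ} {δ M c : ℝ} (hδ : 0 < δ) (hc : 0 < c)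
    (hd : ∀ x ∈ Ioo (0:ℝ) δ, HasDerivAt f (f' x) x)
    (hlow : ∀ x ∈ Ioo (0:ℝ) δ, c / x ^ 2 ≤ f' x)
    (hbdd : ∀ x ∈ Ioo (0:ℝ) δ, |f x| ≤ M) : False := by
  set b := δ / 2 with hb
  have hb0 : 0 < b := by positivity
  have hbδ : b < δ := by rw [hb]; linarith
  have hbmem : b ∈ Ioo (0:ℝ) δ := ⟨hb0, hbδ⟩
  set K := f b + c / b + M with hK
  have hfb : -M ≤ f b := neg_le_of_abs_le (hbdd b hbmem)
  have hKc : 0 < K := by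
    have : 0 < c / b := by positivity
    rw [hK]; linarith
  set x0 := min b (c / (2 * K)) with hx0
  have hx0pos : 0 < x0 := by
    apply lt_min hb0; positivity
  have hx0b : x0 ≤ b := min_le_left _ _
  have hS : f x0 + c * x0⁻¹ ≤ f b + c * b⁻¹ := by
    have hsub : Icc x0 b ⊆ Ioo (0:ℝ) δ := fun y hy => ⟨lt_of_lt_of_le hx0pos hy.1,
      lt_of_le_of_lt hy.2 hbδ⟩
    have hdS : ∀ y ∈ Icc x0 b, HasDerivAt (fun z => f z + c * z⁻¹)
        (f' y + c * (-(y ^ 2)⁻¹)) y := by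
      intro y hy
      have hy0 : y ≠ 0 := ne_of_gt (lt_of_lt_of_le hx0pos hy.1)
      exact (hd y (hsub hy)).add ((hasDerivAt_inv hy0).const_mul c)
    exact monoIcc hx0b
      (fun y hy => (hdS y hy).continuousAt.continuousWithinAt)
      (fun y hy => ⟨_, hdS y (Ioo_subset_Icc_self hy), by
        have hy' := hsub (Ioo_subset_Icc_self hy)
        have h1 := hlow y hy'
        have hy0 : (0:ℝ) < y := hy'.1
        have : c * (-(y ^ 2)⁻¹) = -(c / y ^ 2) := by
          field_simp
        rw [this]; linarith⟩)
  have hfx0 : f x0 ≤ M ∧ -M ≤ f x0 := by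
    have := abs_le.mp (hbdd x0 ⟨hx0pos, lt_of_le_of_lt hx0b hbδ⟩)
    exact ⟨this.2, this.1⟩
  have hcx0 : c / x0 ≤ K := by
    have h1 : c * x0⁻¹ ≤ f b + c / b - f x0 := by
      have : c * b⁻¹ = c / b := (div_eq_mul_inv c b).symm
      rw [← this]; linarith
    have h0 : c / x0 = c * x0⁻¹ := div_eq_mul_inv c x0
    rw [h0, hK]; linarith [hfx0.2]
  have h2K : 2 * K ≤ c / x0 := by
    rw [le_div_iff₀ hx0pos]
    have hle : x0 ≤ c / (2 * K) := min_le_right _ _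
    have := mul_le_mul_of_nonneg_left hle (by positivity : (0:ℝ) ≤ 2 * K)
    rwa [mul_div_cancel₀ c (by positivity : (2*K) ≠ 0)] at this
  have hfin : 2 * K ≤ K := le_trans h2K hcx0
  linarith

set_option maxHeartbeats 1000000 in
/-- `ω₁ > 0`, where `ω₁ = -u'(r*) - ψ₁(r*)`; equivalently
`ψ₁(r*) < -u'(r*)`. -/
theorem omega_one_pos
    (R rs lam : ℝ) (hR : 0 < R) (hrs : 0 < rs) (hrsR : rs < R)
    (u u' : ℝ → ℝ) (hu : EigenProfile R rs lam u u')
    (ψ₁ ψ₁' : ℝ → ℝ) (dp₁ dm₁ : ℝ)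
    (hψ₁ : PsiProfile R rs lam u 1 ψ₁ ψ₁' dp₁ dm₁) :
    0 < -(u' rs) - ψ₁ rs := by
  have hrsIoo : rs ∈ Ioo (0:ℝ) R := ⟨hrs, hrsR⟩
  have hvpos : ∀ r ∈ Ioc (0:ℝ) R, 0 < -(u' r) := fun r hr => by linarith [hu.derivNeg r hr]
  have hvrs : 0 < -(u' rs) := hvpos rs ⟨hrs, hrsR.le⟩
  have hurs : 0 < u rs := hu.pos rs ⟨hrs.le, hrsR⟩
  have hIccmem : ∀ r ∈ Ioo (0:ℝ) R, Icc (0:ℝ) R ∈ 𝓝 r := fun r hr => Icc_mem_nhds hr.1 hr.2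
  have hucontAt : ∀ r ∈ Ioo (0:ℝ) R, ContinuousAt u r :=
    fun r hr => hu.cont.continuousAt (hIccmem r hr)
  have hu'contAt : ∀ r ∈ Ioo (0:ℝ) R, ContinuousAt u' r :=
    fun r hr => hu.derivCont.continuousAt (hIccmem r hr)
  have hψcontAt : ∀ r ∈ Ioo (0:ℝ) R, ContinuousAt ψ₁ r :=
    fun r hr => hψ₁.cont.continuousAt (hIccmem r hr)
  have hu_at : ∀ r ∈ Ioo (0:ℝ) R, HasDerivAt u (u' r) r := fun r hr =>
    (hu.deriv r (Ioo_subset_Icc_self hr)).hasDerivAt (hIccmem r hr)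
  -- derivative of u'
  have hu'_at : ∀ r ∈ Ioo (0:ℝ) R, r ≠ rs →
      HasDerivAt u' (-((lam + (if r < rs then (1:ℝ) else 0)) * u r) - u' r / r) r := by
    intro r hr hne
    have hr0 : r ≠ 0 := ne_of_gt hr.1
    have h1 := (hu.ode r hr hne).div (hasDerivAt_id r) hr0
    have h2 : u' =ᶠ[𝓝 r] fun s => s * u' s / s := by
      filter_upwards [eventually_ne_nhds hr0] with s hs
      rw [mul_comm, mul_div_assoc, div_self hs, mul_one]
    have h3 := h1.congr_of_eventuallyEq h2
    refine h3.congr_deriv ?_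
    simp only [id]
    field_simp
  -- the Wronskian-type function
  set W : ℝ → ℝ := fun s =>
    (s * ψ₁' s) * (-(u' s)) -
      ψ₁ s * (s * ((lam + (if s < rs then (1:ℝ) else 0)) * u s) + u' s) with hW
  -- W has zero derivative away from the interface
  have hWderiv : ∀ r ∈ Ioo (0:ℝ) R, r ≠ rs → HasDerivAt W 0 r := by
    intro r hr hne
    have hr0 : r ≠ 0 := ne_of_gt hr.1
    set c : ℝ := if r < rs then (1:ℝ) else 0 with hc
    have hqev : ∀ᶠ s in 𝓝 r, (if s < rs then (1:ℝ) else 0) = c := by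
      rcases lt_or_gt_of_ne hne with h | h
      · filter_upwards [Iio_mem_nhds h] with s hs
        rw [hc, if_pos (mem_Iio.mp hs), if_pos h]
      · filter_upwards [Ioi_mem_nhds h] with s hs
        rw [hc, if_neg (not_lt.mpr (le_of_lt (mem_Ioi.mp hs))), if_neg (not_lt.mpr h.le)]
    have hua := hu_at r hr
    have hgu : HasDerivAt (fun s => s * u' s) (-(r * ((lam + c) * u r))) r := by
      have := hu.ode r hr hne
      rwa [← hc] at this
    have hu'a : HasDerivAt u' (-((lam + c) * u r) - u' r / r) r := by
      have := hu'_at r hr hne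
      rwa [← hc] at this
    have hψa := hψ₁.deriv r hr hne
    have hgψ := hψ₁.ode r hr hne
    rw [← hc] at hgψ
    have hhc : HasDerivAt (fun s => s * ((lam + c) * u s) + u' s)
        ((1 * ((lam + c) * u r) + r * ((lam + c) * u' r)) +
          (-((lam + c) * u r) - u' r / r)) r :=
      ((hasDerivAt_id r).mul (hua.const_mul (lam + c))).add hu'a
    have hh : HasDerivAt
        (fun s => s * ((lam + (if s < rs then (1:ℝ) else 0)) * u s) + u' s)
        ((1 * ((lam + c) * u r) + r * ((lam + c) * u' r)) +
          (-((lam + c) * u r) - u' r / r)) r := by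
      apply hhc.congr_of_eventuallyEq
      filter_upwards [hqev] with s hs
      rw [hs]
    have hWa := (hgψ.mul hu'a.neg).sub (hψa.mul hh)
    rw [hW]
    refine hWa.congr_deriv ?_
    rw [← hc]
    push_cast
    simp only [Pi.neg_apply]
    field_simp
    ring
  -- W is constant on each side of the interface
  have hWL : ∀ x ∈ Ioo (0:ℝ) rs, W x = W (rs/2) := by
    have hhalf : rs/2 ∈ Ioo (0:ℝ) rs := ⟨by linarith, by linarith⟩
    have key : ∀ a b : ℝ, a ∈ Ioo (0:ℝ) rs → b ∈ Ioo (0:ℝ) rs → a ≤ b → W a = W b := by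
      intro a b ha hb hab
      refine constIcc hab ?_
      intro y hy
      have hy' : y ∈ Ioo (0:ℝ) rs := ⟨lt_of_lt_of_le ha.1 hy.1, lt_of_le_of_lt hy.2 hb.2⟩
      exact hWderiv y ⟨hy'.1, hy'.2.trans hrsR⟩ (ne_of_lt hy'.2)
    intro x hx
    rcases le_total x (rs/2) with h | h
    · exact key x (rs/2) hx hhalf h
    · exact (key (rs/2) x hhalf hx h).symm
  have hWR : ∀ x ∈ Ioo rs R, W x = W ((rs+R)/2) := by
    have hmid : (rs+R)/2 ∈ Ioo rs R := ⟨by linarith, by linarith⟩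
    have key : ∀ a b : ℝ, a ∈ Ioo rs R → b ∈ Ioo rs R → a ≤ b → W a = W b := by
      intro a b ha hb hab
      refine constIcc hab ?_
      intro y hy
      have hy' : y ∈ Ioo rs R := ⟨lt_of_lt_of_le ha.1 hy.1, lt_of_le_of_lt hy.2 hb.2⟩
      exact hWderiv y ⟨hrs.trans hy'.1, hy'.2⟩ (ne_of_gt hy'.1)
    intro x hx
    rcases le_total x ((rs+R)/2) with h | h
    · exact key x ((rs+R)/2) hx hmid h
    · exact (key ((rs+R)/2) x hmid hx h).symm
  -- limits at 0 from the right
  have hsub0 : Ioo (0:ℝ) rs ⊆ Icc (0:ℝ) R :=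
    fun y hy => ⟨hy.1.le, hy.2.le.trans hrsR.le⟩
  have h0rs : 𝓝[Ioo (0:ℝ) rs] (0:ℝ) = 𝓝[>] (0:ℝ) := nhdsWithin_Ioo_eq_nhdsGT hrs
  have hIoo0 : Ioo (0:ℝ) rs ∈ 𝓝[>] (0:ℝ) := Ioo_mem_nhdsGT_of_mem ⟨le_rfl, hrs⟩
  have htu0 : Tendsto u (𝓝[>] (0:ℝ)) (𝓝 (u 0)) := by
    rw [← h0rs]
    exact (hu.cont 0 ⟨le_rfl, hR.le⟩).mono_left (nhdsWithin_mono 0 hsub0)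
  have htu'0 : Tendsto u' (𝓝[>] (0:ℝ)) (𝓝 0) := by
    rw [← h0rs]
    have := (hu.derivCont 0 ⟨le_rfl, hR.le⟩).mono_left (nhdsWithin_mono 0 hsub0)
    rwa [hu.deriv0] at this
  have htψ0 : Tendsto ψ₁ (𝓝[>] (0:ℝ)) (𝓝 0) := by
    rw [← h0rs]
    have := (hψ₁.cont 0 ⟨le_rfl, hR.le⟩).mono_left (nhdsWithin_mono 0 hsub0)
    rwa [hψ₁.val0] at this
  have htid0 : Tendsto (fun x : ℝ => x) (𝓝[>] (0:ℝ)) (𝓝 0) :=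
    (continuous_id.tendsto 0).mono_left nhdsWithin_le_nhds
  -- bounds
  obtain ⟨Mu, hMu⟩ := isCompact_Icc.exists_bound_of_continuousOn hu.cont
  obtain ⟨Mψ, hMψ⟩ := isCompact_Icc.exists_bound_of_continuousOn hψ₁.cont
  have hMu0 : 0 ≤ Mu := le_trans (norm_nonneg _) (hMu 0 ⟨le_rfl, hR.le⟩)
  set Ku : ℝ := |lam + 1| * Mu + 1 with hKudef
  have hKu0 : 0 < Ku := by
    have := mul_nonneg (abs_nonneg (lam+1)) hMu0
    rw [hKudef]; linarith
  -- |u'| ≤ Ku r near 0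
  have hu'bound : ∀ r ∈ Ioo (0:ℝ) rs, |u' r| ≤ Ku * r := by
    intro r hr
    have hrR : r < R := hr.2.trans hrsR
    have hder : ∀ y ∈ Ioc (0:ℝ) r, HasDerivWithinAt (fun s => s * u' s)
        (-(y * ((lam + 1) * u y))) (Ioc 0 r) y := by
      intro y hy
      have hy' : y ∈ Ioo (0:ℝ) R := ⟨hy.1, lt_of_le_of_lt hy.2 hrR⟩
      have hylt : y < rs := lt_of_le_of_lt hy.2 hr.2
      have := hu.ode y hy' (ne_of_lt hylt)
      rw [if_pos hylt] at this
      exact this.hasDerivWithinAt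
    have hbnd : ∀ y ∈ Ioc (0:ℝ) r, ‖-(y * ((lam + 1) * u y))‖ ≤ Ku * r := by
      intro y hy
      rw [norm_neg, norm_mul, norm_mul]
      have h1 : ‖y‖ ≤ r := by
        rw [Real.norm_eq_abs, abs_of_pos hy.1]; exact hy.2
      have h2 : ‖u y‖ ≤ Mu := hMu y ⟨hy.1.le, (hy.2.trans hrR.le)⟩
      have h3 : ‖lam + 1‖ * ‖u y‖ ≤ |lam + 1| * Mu + 1 := by
        rw [Real.norm_eq_abs]
        have := mul_le_mul_of_nonneg_left h2 (abs_nonneg (lam+1))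
        rw [Real.norm_eq_abs] at this ⊢
        linarith
      calc ‖y‖ * (‖lam + 1‖ * ‖u y‖) ≤ r * (|lam + 1| * Mu + 1) := by
            apply mul_le_mul h1 h3 (by positivity) hr.1.le
        _ = Ku * r := by rw [hKudef]; ring
    have hev : ∀ᶠ ε in 𝓝[>] (0:ℝ), ‖r * u' r‖ ≤ Ku * r * r + ‖ε * u' ε‖ := by
      filter_upwards [Ioo_mem_nhdsGT_of_mem (⟨le_rfl, hr.1⟩ : (0:ℝ) ∈ Ico 0 r)] with ε hε
      have hεm : ε ∈ Ioc (0:ℝ) r := ⟨hε.1, hε.2.le⟩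
      have hrm : r ∈ Ioc (0:ℝ) r := ⟨hr.1, le_rfl⟩
      have hlip : ‖r * u' r - ε * u' ε‖ ≤ Ku * r * ‖r - ε‖ := by
        have := Convex.norm_image_sub_le_of_norm_hasDerivWithin_le hder hbnd
          (convex_Ioc 0 r) hεm hrm
        simpa using this
      have htri : ‖r * u' r‖ ≤ ‖r * u' r - ε * u' ε‖ + ‖ε * u' ε‖ := by
        calc ‖r * u' r‖ = ‖(r * u' r - ε * u' ε) + ε * u' ε‖ := by rw [sub_add_cancel]
          _ ≤ ‖r * u' r - ε * u' ε‖ + ‖ε * u' ε‖ := norm_add_le _ _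
      have hd2 : ‖r * u' r - ε * u' ε‖ ≤ Ku * r * r := by
        refine le_trans hlip ?_
        have : ‖r - ε‖ ≤ r := by
          rw [Real.norm_eq_abs, abs_of_nonneg (by linarith [hε.2])]
          linarith [hε.1]
        exact mul_le_mul_of_nonneg_left this (mul_nonneg hKu0.le hr.1.le)
      linarith
    have htl : Tendsto (fun ε => Ku * r * r + ‖ε * u' ε‖) (𝓝[>] (0:ℝ))
        (𝓝 (Ku * r * r + ‖(0:ℝ) * (0:ℝ)‖)) := by
      apply tendsto_const_nhds.add
      exact (Tendsto.norm (htid0.mul htu'0))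
    have hfin := ge_of_tendsto htl hev
    rw [zero_mul, norm_zero, add_zero, Real.norm_eq_abs, abs_mul,
      abs_of_pos hr.1] at hfin
    calc |u' r| = r * |u' r| / r := (mul_div_cancel_left₀ (|u' r|) (ne_of_gt hr.1)).symm
      _ ≤ Ku * r * r / r := (div_le_div_iff_of_pos_right hr.1).mpr hfin
      _ = Ku * r := by rw [mul_div_assoc, div_self (ne_of_gt hr.1), mul_one]
  -- the product (r ψ₁' r)(-u' r) tends to W (rs/2) at 0⁺
  have htprod : Tendsto (fun r => (r * ψ₁' r) * (-(u' r))) (𝓝[>] (0:ℝ)) (𝓝 (W (rs/2))) := by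
    have h1 : Tendsto (fun r => W (rs/2) + ψ₁ r * (r * ((lam+1) * u r) + u' r)) (𝓝[>] (0:ℝ))
        (𝓝 (W (rs/2) + 0 * ((0:ℝ) * ((lam+1) * u 0) + 0))) := by
      apply tendsto_const_nhds.add
      exact htψ0.mul (((htid0.mul (tendsto_const_nhds.mul htu0))).add htu'0)
    have h2 : (W (rs/2) + 0 * ((0:ℝ) * ((lam+1) * u 0) + 0)) = W (rs/2) := by ring
    rw [h2] at h1
    apply h1.congr'
    filter_upwards [hIoo0] with r hrm
    have hWr := hWL r hrm
    have hWr2 : (r * ψ₁' r) * (-(u' r)) -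
        ψ₁ r * (r * ((lam + (if r < rs then (1:ℝ) else 0)) * u r) + u' r) = W (rs/2) := by
      rw [← hWr, hW]
    rw [if_pos hrm.2] at hWr2
    linear_combination -hWr2
  -- the constant of W on the left piece vanishes
  have hbψ : ∀ x ∈ Ioo (0:ℝ) rs, |ψ₁ x| ≤ Mψ := fun x hx => by
    have := hMψ x (hsub0 hx); rwa [Real.norm_eq_abs] at this
  have hC0 : W (rs/2) = 0 := by
    by_contra hC0ne
    rcases lt_or_gt_of_ne hC0ne with hneg | hpos
    · -- W (rs/2) < 0
      have hev : ∀ᶠ r in 𝓝[>] (0:ℝ), (r * ψ₁' r) * (-(u' r)) < W (rs/2) / 2 :=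
        htprod.eventually (eventually_lt_nhds (by linarith))
      have hev2 := hev.and (eventually_of_mem hIoo0 (fun x hx => hx))
      obtain ⟨δ', hδ'gt, hsubδ⟩ := mem_nhdsGT_iff_exists_Ioo_subset.mp hev2
      refine no_blowup (f := fun x => -(ψ₁ x)) (f' := fun x => -(ψ₁' x)) (M := Mψ)
        (mem_Ioi.mp hδ'gt) (div_pos (by linarith : (0:ℝ) < -(W (rs/2))/2) hKu0) ?_ ?_ ?_
      · intro x hx
        obtain ⟨_, hxm⟩ := hsubδ hx
        exact (hψ₁.deriv x ⟨hxm.1, hxm.2.trans hrsR⟩ (ne_of_lt hxm.2)).neg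
      · intro x hx
        obtain ⟨hlt, hxm⟩ := hsubδ hx
        have hvx : 0 < -(u' x) := hvpos x ⟨hxm.1, (hxm.2.trans hrsR).le⟩
        have hvle : -(u' x) ≤ Ku * x := le_trans (neg_le_abs _) (hu'bound x hxm)
        have hxψ : x * ψ₁' x < 0 := by nlinarith
        have h5 : (x * ψ₁' x) * (Ku * x) ≤ (x * ψ₁' x) * (-(u' x)) :=
          mul_le_mul_of_nonpos_left hvle hxψ.le
        have h6 : (x * ψ₁' x) * (Ku * x) < W (rs/2) / 2 := lt_of_le_of_lt h5 hlt
        rw [div_div, div_le_iff₀ (mul_pos hKu0 (pow_pos hxm.1 2))]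
        nlinarith [h6]
      · intro x hx
        obtain ⟨_, hxm⟩ := hsubδ hx
        rw [abs_neg]; exact hbψ x hxm
    · -- W (rs/2) > 0
      have hev : ∀ᶠ r in 𝓝[>] (0:ℝ), W (rs/2) / 2 < (r * ψ₁' r) * (-(u' r)) :=
        htprod.eventually (eventually_gt_nhds (by linarith))
      have hev2 := hev.and (eventually_of_mem hIoo0 (fun x hx => hx))
      obtain ⟨δ', hδ'gt, hsubδ⟩ := mem_nhdsGT_iff_exists_Ioo_subset.mp hev2
      refine no_blowup (f := ψ₁) (f' := ψ₁') (M := Mψ)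
        (mem_Ioi.mp hδ'gt) (div_pos (by linarith : (0:ℝ) < W (rs/2)/2) hKu0) ?_ ?_ ?_
      · intro x hx
        obtain ⟨_, hxm⟩ := hsubδ hx
        exact hψ₁.deriv x ⟨hxm.1, hxm.2.trans hrsR⟩ (ne_of_lt hxm.2)
      · intro x hx
        obtain ⟨hlt, hxm⟩ := hsubδ hx
        have hvx : 0 < -(u' x) := hvpos x ⟨hxm.1, (hxm.2.trans hrsR).le⟩
        have hvle : -(u' x) ≤ Ku * x := le_trans (neg_le_abs _) (hu'bound x hxm)
        have hxψ : 0 < x * ψ₁' x := by nlinarith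
        have h5 : (x * ψ₁' x) * (-(u' x)) ≤ (x * ψ₁' x) * (Ku * x) :=
          mul_le_mul_of_nonneg_left hvle hxψ.le
        have h6 : W (rs/2) / 2 < (x * ψ₁' x) * (Ku * x) := lt_of_lt_of_le hlt h5
        rw [div_div, div_le_iff₀ (mul_pos hKu0 (pow_pos hxm.1 2))]
        nlinarith [h6]
      · intro x hx
        obtain ⟨_, hxm⟩ := hsubδ hx
        exact hbψ x hxm
  -- interface quantities
  have hdenom : -(u' rs) * rs ≠ 0 := ne_of_gt (mul_pos hvrs hrs)
  have hψrsC := hψcontAt rs hrsIoo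
  have hursC := hucontAt rs hrsIoo
  have hu'rsC := hu'contAt rs hrsIoo
  -- left limit of ψ₁' at rs and identification of dm₁
  have hFLc : ContinuousAt
      (fun r => (W (rs/2) + ψ₁ r * (r * ((lam+1) * u r) + u' r)) / (-(u' r) * r)) rs :=
    ContinuousAt.div
      (continuousAt_const.add (hψrsC.mul
        ((continuousAt_id.mul (continuousAt_const.mul hursC)).add hu'rsC)))
      ((hu'rsC.neg).mul continuousAt_id) hdenom
  have hψ'L : Tendsto ψ₁' (𝓝[<] rs)
      (𝓝 ((W (rs/2) + ψ₁ rs * (rs * ((lam+1) * u rs) + u' rs)) / (-(u' rs) * rs))) := by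
    have hbase : Tendsto
        (fun r => (W (rs/2) + ψ₁ r * (r * ((lam+1) * u r) + u' r)) / (-(u' r) * r)) (𝓝[<] rs)
        (𝓝 ((W (rs/2) + ψ₁ rs * (rs * ((lam+1) * u rs) + u' rs)) / (-(u' rs) * rs))) :=
      (hFLc : Tendsto _ _ _).mono_left nhdsWithin_le_nhds
    apply Tendsto.congr' _ hbase
    filter_upwards [Ioo_mem_nhdsLT_of_mem (⟨hrs, le_rfl⟩ : rs ∈ Ioc 0 rs)] with r hrm
    have hWr2 : (r * ψ₁' r) * (-(u' r)) -
        ψ₁ r * (r * ((lam + (if r < rs then (1:ℝ) else 0)) * u r) + u' r) = W (rs/2) := by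
      rw [← hWL r hrm, hW]
    rw [if_pos hrm.2] at hWr2
    have hvr : 0 < -(u' r) := hvpos r ⟨hrm.1, (hrm.2.trans hrsR).le⟩
    rw [div_eq_iff (ne_of_gt (mul_pos hvr hrm.1))]
    linear_combination -hWr2
  have hdm : dm₁ = (W (rs/2) + ψ₁ rs * (rs * ((lam+1) * u rs) + u' rs)) / (-(u' rs) * rs) := by
    have hs1 := slope_tendsto_left (a := rs/2) (b := rs) (by linarith)
      (hψ₁.cont.mono (Icc_subset_Icc (by linarith) hrsR.le))
      (fun y hy => hψ₁.deriv y ⟨lt_trans (by linarith) hy.1, hy.2.trans hrsR⟩ (ne_of_lt hy.2))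
      hψ'L
    have hs2 : Tendsto (fun x => (ψ₁ x - ψ₁ rs) / (x - rs)) (𝓝[<] rs) (𝓝 dm₁) := by
      have h := hψ₁.jumpMinus
      rw [hasDerivWithinAt_iff_tendsto_slope' (s := Iio rs) (by simp : rs ∉ Iio rs)] at h
      exact h.congr (fun x => slope_def_field ψ₁ rs x)
    exact tendsto_nhds_unique hs2 hs1
  -- right limit of ψ₁' at rs and identification of dp₁
  have hFRc : ContinuousAt
      (fun r => (W ((rs+R)/2) + ψ₁ r * (r * (lam * u r) + u' r)) / (-(u' r) * r)) rs :=
    ContinuousAt.div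
      (continuousAt_const.add (hψrsC.mul
        ((continuousAt_id.mul (continuousAt_const.mul hursC)).add hu'rsC)))
      ((hu'rsC.neg).mul continuousAt_id) hdenom
  have hψ'R : Tendsto ψ₁' (𝓝[>] rs)
      (𝓝 ((W ((rs+R)/2) + ψ₁ rs * (rs * (lam * u rs) + u' rs)) / (-(u' rs) * rs))) := by
    have hbase : Tendsto
        (fun r => (W ((rs+R)/2) + ψ₁ r * (r * (lam * u r) + u' r)) / (-(u' r) * r)) (𝓝[>] rs)
        (𝓝 ((W ((rs+R)/2) + ψ₁ rs * (rs * (lam * u rs) + u' rs)) / (-(u' rs) * rs))) :=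
      (hFRc : Tendsto _ _ _).mono_left nhdsWithin_le_nhds
    apply Tendsto.congr' _ hbase
    filter_upwards [Ioo_mem_nhdsGT_of_mem (⟨le_rfl, hrsR⟩ : rs ∈ Ico rs R)] with r hrm
    have hWr2 : (r * ψ₁' r) * (-(u' r)) -
        ψ₁ r * (r * ((lam + (if r < rs then (1:ℝ) else 0)) * u r) + u' r) = W ((rs+R)/2) := by
      rw [← hWR r hrm, hW]
    rw [if_neg (not_lt.mpr hrm.1.le)] at hWr2
    have hr0' : 0 < r := hrs.trans hrm.1
    have hvr : 0 < -(u' r) := hvpos r ⟨hr0', hrm.2.le⟩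
    rw [div_eq_iff (ne_of_gt (mul_pos hvr hr0'))]
    linear_combination -hWr2
  have hdp : dp₁ = (W ((rs+R)/2) + ψ₁ rs * (rs * (lam * u rs) + u' rs)) / (-(u' rs) * rs) := by
    have hs1 := slope_tendsto_right (a := rs) (b := (rs+R)/2) (by linarith)
      (hψ₁.cont.mono (Icc_subset_Icc hrs.le (by linarith)))
      (fun y hy => hψ₁.deriv y ⟨hrs.trans hy.1, lt_of_lt_of_le hy.2 (by linarith)⟩
        (ne_of_gt hy.1)) hψ'R
    have hs2 : Tendsto (fun x => (ψ₁ x - ψ₁ rs) / (x - rs)) (𝓝[>] rs) (𝓝 dp₁) := by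
      have h := hψ₁.jumpPlus
      rw [hasDerivWithinAt_iff_tendsto_slope' (s := Ioi rs) (by simp : rs ∉ Ioi rs)] at h
      exact h.congr (fun x => slope_def_field ψ₁ rs x)
    exact tendsto_nhds_unique hs2 hs1
  -- the jump formula determines the right-piece constant
  have hC1 : W ((rs+R)/2) = rs * u rs * (ψ₁ rs - (-(u' rs))) := by
    have e1 : dm₁ * (-(u' rs) * rs) = W (rs/2) + ψ₁ rs * (rs * ((lam+1) * u rs) + u' rs) := by
      rw [hdm, div_mul_cancel₀ _ hdenom]
    have e2 : dp₁ * (-(u' rs) * rs)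
        = W ((rs+R)/2) + ψ₁ rs * (rs * (lam * u rs) + u' rs) := by
      rw [hdp, div_mul_cancel₀ _ hdenom]
    rw [hC0] at e1
    have hj := hψ₁.jump
    linear_combination e1 - e2 + (-(u' rs) * rs) * hj
  -- endgame
  by_contra hgoal
  push_neg at hgoal
  have hge : -(u' rs) ≤ ψ₁ rs := by linarith
  have hC1nn : 0 ≤ W ((rs+R)/2) := by
    rw [hC1]
    apply mul_nonneg (mul_nonneg hrs.le hurs.le)
    linarith
  have hmono : ψ₁ rs / (-(u' rs)) ≤ ψ₁ R / (-(u' R)) := by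
    apply monoIcc hrsR.le
    · apply ContinuousOn.div (hψ₁.cont.mono (Icc_subset_Icc hrs.le le_rfl))
        ((hu.derivCont.mono (Icc_subset_Icc hrs.le le_rfl)).neg)
      intro x hx
      exact ne_of_gt (hvpos x ⟨lt_of_lt_of_le hrs hx.1, hx.2⟩)
    · intro x hx
      have hx' : x ∈ Ioo (0:ℝ) R := ⟨lt_trans hrs hx.1, hx.2⟩
      have hx0 : x ≠ 0 := ne_of_gt hx'.1
      have hne : x ≠ rs := ne_of_gt hx.1
      have hvx : 0 < -(u' x) := hvpos x ⟨hx'.1, hx.2.le⟩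
      have hψa := hψ₁.deriv x hx' hne
      have hu'a := hu'_at x hx' hne
      rw [if_neg (not_lt.mpr hx.1.le)] at hu'a
      have hva : HasDerivAt (fun s => -(u' s)) (-(-((lam + 0) * u x) - u' x / x)) x :=
        hu'a.neg
      refine ⟨_, hψa.div hva (ne_of_gt hvx), ?_⟩
      apply div_nonneg _ (sq_nonneg _)
      have hWx : (x * ψ₁' x) * (-(u' x)) -
          ψ₁ x * (x * ((lam + (if x < rs then (1:ℝ) else 0)) * u x) + u' x)
          = W ((rs+R)/2) := by
        rw [← hWR x hx, hW]
      rw [if_neg (not_lt.mpr hx.1.le)] at hWx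
      have hnum : (ψ₁' x * (-(u' x)) - ψ₁ x * (-(-((lam + 0) * u x) - u' x / x))) * x
          = W ((rs+R)/2) := by
        rw [← hWx]
        field_simp
        ring
      nlinarith [hnum, hC1nn, hx'.1]
  have hR0' : ψ₁ R / (-(u' R)) = 0 := by rw [hψ₁.valR, zero_div]
  rw [hR0'] at hmono
  have hψrs_np : ψ₁ rs ≤ 0 := by
    by_contra hpos'
    push_neg at hpos'
    have := div_pos hpos' hvrs
    linarith
  linarith

end
end

section
/- There exists a constant $C>0$ such that $\omega_k\ge C$ for every integer $k\ge1$, where $\omega_k:=-u_*'(r^*)-\psi_k(r^*)$. -/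
open Set

noncomputable section

open Filter intervalIntegral

lemma aux_min_Ioi {f : ℝ → ℝ} {x a : ℝ} (hmin : IsLocalMin f x)
    (h : HasDerivWithinAt f a (Ioi x) x) : 0 ≤ a := by
  have hs : Tendsto (slope f x) (nhdsWithin x (Ioi x \ {x})) (nhds a) :=
    hasDerivWithinAt_iff_tendsto_slope.mp h
  rw [Set.diff_singleton_eq_self (by simp)] at hs
  refine ge_of_tendsto hs ?_
  filter_upwards [self_mem_nhdsWithin,
    (hmin.filter_mono nhdsWithin_le_nhds : ∀ᶠ y in nhdsWithin x (Ioi x), f x ≤ f y)] with y hy hfy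
  have hyx : (0:ℝ) < y - x := sub_pos.mpr hy
  simp only [slope_def_field]
  exact div_nonneg (sub_nonneg.mpr hfy) hyx.le

lemma aux_min_Iio {f : ℝ → ℝ} {x a : ℝ} (hmin : IsLocalMin f x)
    (h : HasDerivWithinAt f a (Iio x) x) : a ≤ 0 := by
  have hs : Tendsto (slope f x) (nhdsWithin x (Iio x \ {x})) (nhds a) :=
    hasDerivWithinAt_iff_tendsto_slope.mp h
  rw [Set.diff_singleton_eq_self (by simp)] at hs
  refine le_of_tendsto hs ?_
  filter_upwards [self_mem_nhdsWithin,
    (hmin.filter_mono nhdsWithin_le_nhds : ∀ᶠ y in nhdsWithin x (Iio x), f x ≤ f y)] with y hy hfy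
  have hyx : y - x < 0 := sub_neg.mpr hy
  simp only [slope_def_field]
  exact div_nonpos_of_nonneg_of_nonpos (sub_nonneg.mpr hfy) hyx.le


variable {R rs lam : ℝ} {u u' : ℝ → ℝ}

/-- derivative of `u` at interior points -/
lemma hasDerivAt_u (hu : EigenProfile R rs lam u u') {x : ℝ} (hx : x ∈ Ioo (0:ℝ) R) :
    HasDerivAt u (u' x) x :=
  (hu.deriv x (Ioo_subset_Icc_self hx)).hasDerivAt (Icc_mem_nhds hx.1 hx.2)

/-- derivative of `u'` at interior points away from `rs` -/
lemma hasDerivAt_u' (hu : EigenProfile R rs lam u u') {x : ℝ} (hx : x ∈ Ioo (0:ℝ) R)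
    (hne : x ≠ rs) :
    HasDerivAt u' (-((lam + (if x < rs then (1:ℝ) else 0)) * u x) - u' x / x) x := by
  have hx0 : x ≠ 0 := ne_of_gt hx.1
  have hp := hu.ode x hx hne
  have hq : HasDerivAt (fun s => (s * u' s) / s)
      ((-(x * ((lam + (if x < rs then (1:ℝ) else 0)) * u x)) * x - (x * u' x) * 1) / x ^ 2) x :=
    hp.div (hasDerivAt_id x) hx0
  have he : u' =ᶠ[nhds x] (fun s => (s * u' s) / s) := by
    filter_upwards [eventually_ne_nhds hx0] with s hs
    field_simp
  have := hq.congr_of_eventuallyEq he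
  refine this.congr_deriv ?_
  field_simp

set_option maxHeartbeats 2000000 in
lemma exists_Phi (hR : 0 < R) (hrs : 0 < rs) (hrsR : rs < R)
    (hu : EigenProfile R rs lam u u') :
    ∃ (Φ Φd : ℝ → ℝ) (PL PR c : ℝ), 0 < c ∧
      Φ rs = -u' rs - c ∧
      ContinuousOn Φ (Icc 0 R) ∧
      (∀ x ∈ Icc (0:ℝ) R, 0 ≤ Φ x) ∧
      Φ 0 = 0 ∧ 0 < Φ R ∧
      (∀ x ∈ Ioo (0:ℝ) R, x ≠ rs → HasDerivAt Φ (Φd x) x) ∧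
      (∀ x ∈ Ioo (0:ℝ) R, x ≠ rs →
        HasDerivAt (fun s => s * Φd s)
          (-(x * ((lam + (if x < rs then (1:ℝ) else 0) - 1/x^2) * Φ x))) x) ∧
      HasDerivWithinAt Φ PL (Iio rs) rs ∧
      HasDerivWithinAt Φ PR (Ioi rs) rs ∧
      PR - PL < -(u rs) := by
  have hrsIcc : rs ∈ Icc (0:ℝ) R := ⟨hrs.le, hrsR.le⟩
  have hrsIoo : rs ∈ Ioo (0:ℝ) R := ⟨hrs, hrsR⟩
  have hurs : 0 < u rs := hu.pos rs ⟨hrs.le, hrsR⟩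
  have hvrs : 0 < -(u' rs) := neg_pos.mpr (hu.derivNeg rs ⟨hrs, hrsR.le⟩)
  set g₀ : ℝ → ℝ := fun t => 1/(t*(u' t)^2) with hg₀
  set Wp : ℝ → ℝ := fun y => ∫ t in rs..y, g₀ t with hWp
  set W : ℝ → ℝ := fun r => Wp (max rs r) with hW
  set A : ℝ := 2*rs*u rs*(-(u' rs)) with hA
  set Q : ℝ := Wp R with hQ
  set ε : ℝ := 1/(2*(1+A*Q)) with hε
  set Φ : ℝ → ℝ := fun r => (-(u' r)) * (1 - ε*(1+A*W r)) with hΦ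
  set Φd : ℝ → ℝ := fun x => ((lam + (if x ≤ rs then (1:ℝ) else 0))*u x + u' x/x)
      * (1 - ε*(1+A*W x)) - (if rs < x then ε*A/(x * (-(u' x))) else 0) with hΦd
  -- positivity of A
  have hApos : 0 < A := by
    have := mul_pos (mul_pos (by linarith : (0:ℝ) < 2*rs) hurs) hvrs
    simpa [hA, mul_assoc] using this
  -- basic facts about the integrand
  have hg₀cont : ContinuousOn g₀ (Ioc 0 R) := by
    apply ContinuousOn.div continuousOn_const
    · exact continuousOn_id.mul ((hu.derivCont.mono Ioc_subset_Icc_self).pow 2)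
    · intro t ht
      have ht0 : (0:ℝ) < t := ht.1
      have : u' t ≠ 0 := ne_of_lt (hu.derivNeg t ht)
      positivity
  have hIccsub : Icc rs R ⊆ Ioc 0 R := fun t ht => ⟨lt_of_lt_of_le hrs ht.1, ht.2⟩
  have hg₀pos : ∀ t ∈ Icc rs R, 0 < g₀ t := by
    intro t ht
    have ht0 : (0:ℝ) < t := lt_of_lt_of_le hrs ht.1
    have : u' t ≠ 0 := ne_of_lt (hu.derivNeg t (hIccsub ht))
    have : (0:ℝ) < t * (u' t)^2 := by positivity
    exact div_pos one_pos this
  have hint : ∀ x ∈ Icc rs R, IntervalIntegrable g₀ MeasureTheory.volume rs x := by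
    intro x hx
    apply ContinuousOn.intervalIntegrable
    rw [uIcc_of_le hx.1]
    exact hg₀cont.mono (fun t ht => hIccsub ⟨ht.1, le_trans ht.2 hx.2⟩)
  have hWp0 : Wp rs = 0 := intervalIntegral.integral_same
  have hWrs0 : ∀ r, r ≤ rs → W r = 0 := by
    intro r hr; simp [hW, max_eq_left hr, hWp0]
  have hQnn : 0 ≤ Q := by
    rw [hQ]
    exact intervalIntegral.integral_nonneg hrsR.le (fun t ht => (hg₀pos t ht).le)
  have hWpnn : ∀ r ∈ Icc rs R, 0 ≤ Wp r := by
    intro r hr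
    exact intervalIntegral.integral_nonneg hr.1 (fun t ht => (hg₀pos t ⟨ht.1, le_trans ht.2 hr.2⟩).le)
  have hWple : ∀ r ∈ Icc rs R, Wp r ≤ Q := by
    intro r hr
    have hint2 : IntervalIntegrable g₀ MeasureTheory.volume r R := by
      apply ContinuousOn.intervalIntegrable
      rw [uIcc_of_le hr.2]
      exact hg₀cont.mono (fun t ht => hIccsub ⟨le_trans hr.1 ht.1, ht.2⟩)
    have hadd := intervalIntegral.integral_add_adjacent_intervals (hint r hr) hint2
    have hnn : 0 ≤ ∫ t in r..R, g₀ t :=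
      intervalIntegral.integral_nonneg hr.2 (fun t ht => (hg₀pos t ⟨le_trans hr.1 ht.1, ht.2⟩).le)
    rw [hQ, hWp]
    dsimp only
    linarith [hadd, hnn]
  have hWle : ∀ r ∈ Icc (0:ℝ) R, W r ≤ Q := by
    intro r hr
    rcases le_or_gt r rs with h | h
    · rw [hWrs0 r h]; exact hQnn
    · rw [hW]; dsimp only
      rw [max_eq_right h.le]
      exact hWple r ⟨h.le, hr.2⟩
  have hWnn : ∀ r ∈ Icc (0:ℝ) R, 0 ≤ W r := by
    intro r hr
    rcases le_or_gt r rs with h | h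
    · rw [hWrs0 r h]
    · rw [hW]; dsimp only
      rw [max_eq_right h.le]
      exact hWpnn r ⟨h.le, hr.2⟩
  have h1AQ : (0:ℝ) < 1 + A*Q := by positivity
  have hεpos : 0 < ε := by rw [hε]; positivity
  have hεAQ : ε*(1+A*Q) = 1/2 := by rw [hε]; field_simp
  have hhalf : ∀ r ∈ Icc (0:ℝ) R, ε*(1+A*W r) ≤ 1/2 := by
    intro r hr
    calc ε*(1+A*W r) ≤ ε*(1+A*Q) :=
          mul_le_mul_of_nonneg_left (by nlinarith [hWle r hr]) hεpos.le
      _ = 1/2 := hεAQ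
  have hε1 : ε < 1 := by
    have h2 : (2:ℝ) ≤ 2*(1+A*Q) := by nlinarith [mul_nonneg hApos.le hQnn]
    have := one_div_le_one_div_of_le (by norm_num : (0:ℝ) < 2) h2
    rw [hε]; linarith
  have hWcont : ContinuousOn W (Icc 0 R) := by
    have h1 : ContinuousOn Wp (uIcc rs R) := by
      apply intervalIntegral.continuousOn_primitive_interval
      rw [uIcc_of_le hrsR.le]
      exact (hg₀cont.mono hIccsub).integrableOn_Icc
    apply h1.comp ((continuous_const.max continuous_id).continuousOn)
    intro r hr
    rw [uIcc_of_le hrsR.le]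
    exact ⟨le_max_left _ _, max_le hrsR.le hr.2⟩
  have hWeqIoi : ∀ s, rs < s → W s = Wp s := by
    intro s hs; rw [hW]; dsimp only; rw [max_eq_right hs.le]
  have hWderiv : ∀ x ∈ Ioo (0:ℝ) R, rs ≤ x → HasDerivAt Wp (g₀ x) x := by
    intro x hx hrsx
    exact intervalIntegral.integral_hasDerivAt_right (hint x ⟨hrsx, hx.2.le⟩)
      ((hg₀cont.mono Ioo_subset_Ioc_self).stronglyMeasurableAtFilter isOpen_Ioo x hx)
      ((hg₀cont.mono Ioo_subset_Ioc_self).continuousAt (isOpen_Ioo.mem_nhds hx))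
  have hvnn : ∀ r ∈ Icc (0:ℝ) R, 0 ≤ -(u' r) := by
    rintro r ⟨h0, hRr⟩
    rcases eq_or_lt_of_le h0 with h | h
    · simp [← h, hu.deriv0]
    · exact (neg_pos.mpr (hu.derivNeg r ⟨h, hRr⟩)).le
  have hΦrs : Φ rs = (-(u' rs)) * (1-ε) := by
    simp [hΦ, hWrs0 rs le_rfl]
  clear_value g₀ Wp W A Q ε Φ Φd
  refine ⟨Φ, Φd, ((lam+1)*u rs + u' rs/rs)*(1-ε),
    (lam*u rs + u' rs/rs)*(1-ε) - 2*ε*u rs, ε * (-(u' rs)),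
    mul_pos hεpos hvrs, by rw [hΦrs]; ring, ?_, ?_, ?_, ?_, ?_, ?_, ?_, ?_, ?_⟩
  · -- continuity
    rw [hΦ]
    exact hu.derivCont.neg.mul (continuousOn_const.sub (continuousOn_const.mul
      (continuousOn_const.add (continuousOn_const.mul hWcont))))
  · -- nonneg
    intro x hx
    have h1 : ε*(1+A*W x) ≤ 1/2 := hhalf x hx
    have h2 := hvnn x hx
    rw [hΦ]
    exact mul_nonneg h2 (by linarith)
  · -- Φ 0 = 0
    simp [hΦ, hu.deriv0]
  · -- Φ R > 0
    have hWR : W R = Q := by simp [hW, max_eq_right hrsR.le, hQ]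
    have hvR : 0 < -(u' R) := neg_pos.mpr (hu.derivNeg R ⟨hR, le_rfl⟩)
    have : Φ R = (-(u' R)) * (1 - 1/2) := by simp only [hΦ]; rw [hWR, hεAQ]
    rw [this]; nlinarith
  · -- interior derivative
    intro x hx hne
    rcases lt_or_gt_of_ne hne with hlt | hgt
    · have hD := hasDerivAt_u' hu hx hne
      rw [if_pos hlt] at hD
      have hq : HasDerivAt (fun s => (-(u' s)) * (1-ε))
          ((-(-((lam + 1) * u x) - u' x / x)) * (1-ε)) x := (hD.neg).mul_const _
      have hev : Φ =ᶠ[nhds x] fun s => (-(u' s)) * (1-ε) := by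
        filter_upwards [Iio_mem_nhds hlt] with s hs
        simp only [hΦ]
        rw [hWrs0 s (le_of_lt hs)]; ring
      have hfin := hq.congr_of_eventuallyEq hev
      refine hfin.congr_deriv ?_
      simp only [hΦd]
      rw [if_pos hlt.le, if_neg (not_lt.mpr hlt.le), hWrs0 x hlt.le]
      ring
    · have hx0 : x ≠ 0 := ne_of_gt hx.1
      have hvx : u' x < 0 := hu.derivNeg x ⟨hx.1, hx.2.le⟩
      have hD := hasDerivAt_u' hu hx hne
      rw [if_neg (not_lt.mpr hgt.le)] at hD
      have hWd : HasDerivAt Wp (g₀ x) x := hWderiv x hx hgt.le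
      have h2 : HasDerivAt (fun s => 1 - ε*(1+A*Wp s)) (-(ε*(A*g₀ x))) x :=
        ((((hWd.const_mul A).const_add 1).const_mul ε).const_sub 1)
      have hq := (hD.neg).mul h2
      have hev : Φ =ᶠ[nhds x] fun s => (-(u' s)) * (1 - ε*(1+A*Wp s)) := by
        filter_upwards [Ioi_mem_nhds hgt] with s hs
        simp only [hΦ]
        rw [hWeqIoi s hs]
      have hfin := hq.congr_of_eventuallyEq hev
      refine hfin.congr_deriv ?_
      simp only [hΦd]
      rw [if_neg (not_le.mpr hgt), if_pos hgt, hWeqIoi x hgt]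
      have hu2 : u' x ≠ 0 := ne_of_lt hvx
      simp only [Pi.neg_apply, Pi.add_apply, Pi.sub_apply, Pi.mul_apply, hg₀]
      field_simp [hg₀, hu2]
      ring
  · -- interior ODE for s * Φd s
    intro x hx hne
    have hx0 : x ≠ 0 := ne_of_gt hx.1
    have hvx : u' x < 0 := hu.derivNeg x ⟨hx.1, hx.2.le⟩
    have hvx0 : u' x ≠ 0 := ne_of_lt hvx
    have hD := hasDerivAt_u' hu hx hne
    have hU := hasDerivAt_u hu hx
    have hsu : HasDerivAt (fun s => s * u s) (1 * u x + x * u' x) x := (hasDerivAt_id x).mul hU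
    rcases lt_or_gt_of_ne hne with hlt | hgt
    · rw [if_pos hlt] at hD
      have hq : HasDerivAt (fun s => ((lam+1)*(s*u s) + u' s)*(1-ε))
          (((lam+1)*(1*u x + x*u' x) + (-((lam + 1) * u x) - u' x / x))*(1-ε)) x :=
        ((hsu.const_mul (lam+1)).add hD).mul_const _
      have hev : (fun s => s * Φd s) =ᶠ[nhds x]
          fun s => ((lam+1)*(s*u s) + u' s)*(1-ε) := by
        filter_upwards [Iio_mem_nhds hlt, eventually_ne_nhds hx0] with s hs hs0
        have hs' : s < rs := hs
        simp only [hΦd]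
        rw [if_pos hs'.le, if_neg (not_lt.mpr hs'.le), hWrs0 s hs'.le]
        have hval : s * ((lam+1)*u s + u' s/s) = (lam+1)*(s*u s) + u' s := by
          field_simp
        rw [sub_zero, show (1:ℝ) - ε*(1+A*0) = 1-ε by ring, ← hval]
        ring
      have hfin := hq.congr_of_eventuallyEq hev
      refine hfin.congr_deriv ?_
      rw [if_pos hlt]
      have hΦx : Φ x = (-(u' x))*(1-ε) := by
        simp only [hΦ]
        rw [hWrs0 x hlt.le]; ring
      rw [hΦx]
      field_simp
      ring
    · rw [if_neg (not_lt.mpr hgt.le)] at hD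
      have hWd : HasDerivAt Wp (g₀ x) x := hWderiv x hx hgt.le
      have h2 : HasDerivAt (fun s => 1 - ε*(1+A*Wp s)) (-(ε*(A*g₀ x))) x :=
        ((((hWd.const_mul A).const_add 1).const_mul ε).const_sub 1)
      have hq1 := ((hsu.const_mul lam).add hD).mul h2
      have hq2 : HasDerivAt (fun s => ε*A/(u' s))
          ((0 * u' x - ε*A*(-((lam+0) * u x) - u' x / x))/(u' x)^2) x :=
        (hasDerivAt_const x (ε*A)).div hD hvx0
      have hq := hq1.add hq2
      have hev : (fun s => s * Φd s) =ᶠ[nhds x]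
          fun s => (lam*(s*u s) + u' s)*(1 - ε*(1+A*Wp s)) + ε*A/(u' s) := by
        filter_upwards [Ioi_mem_nhds hgt, isOpen_Ioo.mem_nhds hx] with s hs hsIoo
        have hs' : rs < s := hs
        have hs0 : s ≠ 0 := ne_of_gt hsIoo.1
        have hvs : u' s ≠ 0 := ne_of_lt (hu.derivNeg s ⟨hsIoo.1, hsIoo.2.le⟩)
        simp only [hΦd]
        rw [if_neg (not_le.mpr hs'), if_pos hs', hWeqIoi s hs']
        field_simp
        ring
      have hfin := hq.congr_of_eventuallyEq hev
      refine hfin.congr_deriv ?_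
      rw [if_neg (not_lt.mpr hgt.le)]
      have hΦx : Φ x = (-(u' x))*(1 - ε*(1+A*Wp x)) := by
        simp only [hΦ]
        rw [hWeqIoi x hgt]
      rw [hΦx]
      simp only [Pi.neg_apply, Pi.add_apply, Pi.sub_apply, Pi.mul_apply, hg₀]
      field_simp [hg₀]
      ring
  · -- left one-sided
    have hsub : Ioo (rs/2) rs ⊆ Ioo (0:ℝ) R :=
      fun y hy => ⟨lt_trans (by linarith) hy.1, lt_trans hy.2 hrsR⟩
    have hdiff : DifferentiableOn ℝ u' (Ioo (rs/2) rs) := fun y hy =>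
      ((hasDerivAt_u' hu (hsub hy) (ne_of_lt hy.2)).differentiableAt).differentiableWithinAt
    have hclim : ContinuousWithinAt u' (Ioo (rs/2) rs) rs :=
      (hu.derivCont rs hrsIcc).mono
        (fun y hy => ⟨by nlinarith [hy.1], le_trans hy.2.le hrsR.le⟩)
    have hmem : Ioo (rs/2) rs ∈ nhdsWithin rs (Iio rs) :=
      Ioo_mem_nhdsLT_of_mem ⟨by linarith, le_rfl⟩
    have hcu : ContinuousAt u rs := hu.cont.continuousAt (Icc_mem_nhds hrs hrsR)
    have hcu' : ContinuousAt u' rs := hu.derivCont.continuousAt (Icc_mem_nhds hrs hrsR)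
    have hlim : Tendsto (fun y => deriv u' y) (nhdsWithin rs (Iio rs))
        (nhds (-((lam+1)*u rs) - u' rs/rs)) := by
      have hexp : ContinuousAt (fun y => -((lam+1)*u y) - u' y/y) rs :=
        ((continuousAt_const.mul hcu).neg).sub (hcu'.div continuousAt_id (ne_of_gt hrs))
      refine Tendsto.congr' ?_ (hexp.tendsto.mono_left nhdsWithin_le_nhds)
      filter_upwards [hmem] with y hy
      have hder := hasDerivAt_u' hu (hsub hy) (ne_of_lt hy.2)
      rw [if_pos hy.2] at hder
      exact (hder.deriv).symm
    have hu'L : HasDerivWithinAt u' (-((lam+1)*u rs) - u' rs/rs) (Iio rs) rs :=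
      (hasDerivWithinAt_Iic_of_tendsto_deriv hdiff hclim hmem hlim).mono Iio_subset_Iic_self
    have hq : HasDerivWithinAt (fun s => (-(u' s))*(1-ε))
        ((-(-((lam+1)*u rs) - u' rs/rs))*(1-ε)) (Iio rs) rs := (hu'L.neg).mul_const _
    have hcongr := hq.congr (f₁ := Φ)
      (fun y hy => by
        simp only [hΦ]
        rw [hWrs0 y (le_of_lt hy)]; ring)
      (by simp only [hΦ]
          rw [hWrs0 rs le_rfl]; ring)
    refine hcongr.congr_deriv ?_
    ring
  · -- right one-sided
    have hsub : Ioo rs R ⊆ Ioo (0:ℝ) R := fun y hy => ⟨lt_trans hrs hy.1, hy.2⟩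
    have hdiff : DifferentiableOn ℝ u' (Ioo rs R) := fun y hy =>
      ((hasDerivAt_u' hu (hsub hy) (ne_of_gt hy.1)).differentiableAt).differentiableWithinAt
    have hclim : ContinuousWithinAt u' (Ioo rs R) rs :=
      (hu.derivCont rs hrsIcc).mono
        (fun y hy => ⟨le_trans hrs.le hy.1.le, hy.2.le⟩)
    have hmem : Ioo rs R ∈ nhdsWithin rs (Ioi rs) :=
      Ioo_mem_nhdsGT_of_mem ⟨le_rfl, hrsR⟩
    have hcu : ContinuousAt u rs := hu.cont.continuousAt (Icc_mem_nhds hrs hrsR)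
    have hcu' : ContinuousAt u' rs := hu.derivCont.continuousAt (Icc_mem_nhds hrs hrsR)
    have hlim : Tendsto (fun y => deriv u' y) (nhdsWithin rs (Ioi rs))
        (nhds (-((lam+0)*u rs) - u' rs/rs)) := by
      have hexp : ContinuousAt (fun y => -((lam+0)*u y) - u' y/y) rs :=
        ((continuousAt_const.mul hcu).neg).sub (hcu'.div continuousAt_id (ne_of_gt hrs))
      refine Tendsto.congr' ?_ (hexp.tendsto.mono_left nhdsWithin_le_nhds)
      filter_upwards [hmem] with y hy
      have hder := hasDerivAt_u' hu (hsub hy) (ne_of_gt hy.1)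
      rw [if_neg (not_lt.mpr hy.1.le)] at hder
      exact (hder.deriv).symm
    have hu'R : HasDerivWithinAt u' (-((lam+0)*u rs) - u' rs/rs) (Ioi rs) rs :=
      (hasDerivWithinAt_Ici_of_tendsto_deriv hdiff hclim hmem hlim).mono Ioi_subset_Ici_self
    have hWd : HasDerivAt Wp (g₀ rs) rs := hWderiv rs hrsIoo le_rfl
    have h2 : HasDerivWithinAt (fun s => 1 - ε*(1+A*Wp s)) (-(ε*(A*g₀ rs))) (Ioi rs) rs :=
      ((((hWd.hasDerivWithinAt.const_mul A).const_add 1).const_mul ε).const_sub 1)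
    have hq := (hu'R.neg).mul h2
    have hcongr := hq.congr (f₁ := Φ)
      (fun y hy => by
        simp only [hΦ]
        rw [hWeqIoi y hy]; rfl)
      (by simp only [hΦ]
          rw [hWrs0 rs le_rfl]; simp [hWp0])
    have hv0 : u' rs ≠ 0 := ne_of_lt (hu.derivNeg rs ⟨hrs, hrsR.le⟩)
    have hAg : A * g₀ rs = -(2*u rs)/u' rs := by
      simp only [hA, hg₀]
      field_simp
    refine hcongr.congr_deriv ?_
    rw [hWp0, mul_zero, add_zero, hAg]
    simp only [Pi.neg_apply, Pi.add_apply, Pi.sub_apply, Pi.mul_apply]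
    field_simp
    ring
  · -- jump
    have : 0 < ε * u rs := mul_pos hεpos hurs
    nlinarith

set_option maxHeartbeats 2000000 in
lemma psi_le_Phi (hR : 0 < R) (hrs : 0 < rs) (hrsR : rs < R)
    (hu : EigenProfile R rs lam u u')
    {k : ℕ} (hk : 1 ≤ k) {ψ ψ' : ℝ → ℝ} {dplus dminus : ℝ}
    (hψ : PsiProfile R rs lam u k ψ ψ' dplus dminus)
    {Φ Φd : ℝ → ℝ} {PL PR : ℝ}
    (hΦcont : ContinuousOn Φ (Icc 0 R))
    (hΦnn : ∀ x ∈ Icc (0:ℝ) R, 0 ≤ Φ x)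
    (hΦ0 : Φ 0 = 0) (hΦR : 0 < Φ R)
    (hΦd : ∀ x ∈ Ioo (0:ℝ) R, x ≠ rs → HasDerivAt Φ (Φd x) x)
    (hΦode : ∀ x ∈ Ioo (0:ℝ) R, x ≠ rs →
        HasDerivAt (fun s => s * Φd s)
          (-(x * ((lam + (if x < rs then (1:ℝ) else 0) - 1/x^2) * Φ x))) x)
    (hPL : HasDerivWithinAt Φ PL (Iio rs) rs)
    (hPR : HasDerivWithinAt Φ PR (Ioi rs) rs)
    (hjump : PR - PL < -(u rs)) :
    ψ rs ≤ Φ rs := by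
  by_contra hcon
  push_neg at hcon
  have hrsIoo : rs ∈ Ioo (0:ℝ) R := ⟨hrs, hrsR⟩
  set d : ℝ → ℝ := fun r => Φ r - ψ r with hd
  have hdrs : d rs < 0 := by rw [hd]; dsimp only; linarith
  have hdcont : ContinuousOn d (Icc 0 R) := hΦcont.sub hψ.cont
  have hdR : 0 < d R := by rw [hd]; dsimp only; rw [hψ.valR]; linarith
  have hd0 : d 0 = 0 := by rw [hd]; dsimp only; rw [hψ.val0, hΦ0]; ring
  have hRmem : R ∈ Icc (0:ℝ) R := ⟨hR.le, le_rfl⟩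
  have hev : ∀ᶠ y in nhdsWithin R (Icc 0 R), 0 < d y :=
    (hdcont R hRmem).eventually (eventually_gt_nhds hdR)
  rcases Metric.mem_nhdsWithin_iff.mp hev with ⟨δ₀, hδ₀, hball⟩
  set δ : ℝ := min δ₀ (R - rs) with hδ
  have hδpos : 0 < δ := lt_min hδ₀ (by linarith)
  have hδle : δ ≤ R - rs := min_le_right _ _
  have hδle' : δ ≤ δ₀ := min_le_left _ _
  set b : ℝ := R - δ/2 with hb
  have hrsb : rs < b := by rw [hb]; linarith
  have hbR : b < R := by rw [hb]; linarith
  have hb0 : 0 < b := lt_trans hrs hrsb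
  have hdb : 0 < d b := by
    apply hball
    refine ⟨?_, ⟨by linarith, hbR.le⟩⟩
    rw [Metric.mem_ball, Real.dist_eq]
    have habs : |b - R| = δ/2 := by rw [hb]; rw [abs_of_nonpos] <;> linarith
    rw [habs]; linarith
  have hKsub : Icc (0:ℝ) b ⊆ Icc 0 R := Icc_subset_Icc le_rfl hbR.le
  have hupos : ∀ y ∈ Icc (0:ℝ) b, 0 < u y :=
    fun y hy => hu.pos y ⟨hy.1, lt_of_le_of_lt hy.2 hbR⟩
  set g : ℝ → ℝ := fun r => d r / u r with hg
  have hgcont : ContinuousOn g (Icc (0:ℝ) b) :=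
    (hdcont.mono hKsub).div (hu.cont.mono hKsub) (fun y hy => ne_of_gt (hupos y hy))
  obtain ⟨r₀, hr₀K, hmin⟩ :=
    (isCompact_Icc).exists_isMinOn ⟨0, ⟨le_rfl, hb0.le⟩⟩ hgcont
  have hrsK : rs ∈ Icc (0:ℝ) b := ⟨hrs.le, hrsb.le⟩
  have hgrs : g rs < 0 := div_neg_of_neg_of_pos hdrs (hupos rs hrsK)
  have hm : g r₀ < 0 := lt_of_le_of_lt (hmin hrsK) hgrs
  have hr₀0 : 0 < r₀ := by
    rcases eq_or_lt_of_le hr₀K.1 with h | h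
    · exfalso
      rw [← h] at hm
      rw [hg] at hm; dsimp only at hm
      rw [hd0] at hm; simp at hm
    · exact h
  have hr₀b : r₀ < b := by
    rcases eq_or_lt_of_le hr₀K.2 with h | h
    · exfalso
      have hgb : 0 < g b := div_pos hdb (hupos b ⟨hb0.le, le_rfl⟩)
      rw [h] at hm; linarith
    · exact h
  have hr₀R : r₀ ∈ Ioo (0:ℝ) R := ⟨hr₀0, lt_trans hr₀b hbR⟩
  have hloc : IsLocalMin g r₀ := hmin.isLocalMin (Icc_mem_nhds hr₀0 hr₀b)
  have hdr₀neg : d r₀ < 0 := by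
    by_contra hge
    push_neg at hge
    have : 0 ≤ g r₀ := by
      rw [hg]; dsimp only
      exact div_nonneg hge (hupos r₀ hr₀K).le
    linarith
  rcases eq_or_ne r₀ rs with heq | hne
  · -- minimum at the interface
    subst heq
    have hud : HasDerivAt u (u' r₀) r₀ := hasDerivAt_u hu hr₀R
    have hu0 : u r₀ ≠ 0 := ne_of_gt (hupos r₀ hr₀K)
    have hgL : HasDerivWithinAt g
        (((PL - dminus) * u r₀ - d r₀ * u' r₀)/(u r₀)^2) (Iio r₀) r₀ :=
      (hPL.sub hψ.jumpMinus).div hud.hasDerivWithinAt hu0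
    have hgR : HasDerivWithinAt g
        (((PR - dplus) * u r₀ - d r₀ * u' r₀)/(u r₀)^2) (Ioi r₀) r₀ :=
      (hPR.sub hψ.jumpPlus).div hud.hasDerivWithinAt hu0
    have h1 := aux_min_Ioi hloc hgR
    have h2 := aux_min_Iio hloc hgL
    have hnum : ((PR - dplus) * u r₀ - d r₀ * u' r₀)
        - ((PL - dminus) * u r₀ - d r₀ * u' r₀) < 0 := by
      have hj := hψ.jump
      have hups := hupos r₀ hrsK
      nlinarith
    have hdiff : ((PR - dplus) * u r₀ - d r₀ * u' r₀)/(u r₀)^2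
        - ((PL - dminus) * u r₀ - d r₀ * u' r₀)/(u r₀)^2 < 0 := by
      rw [div_sub_div_same]
      exact div_neg_of_neg_of_pos hnum (pow_pos (hupos r₀ hrsK) 2)
    linarith
  · -- interior minimum away from the interface
    have hud : HasDerivAt u (u' r₀) r₀ := hasDerivAt_u hu hr₀R
    have hu0 : u r₀ ≠ 0 := ne_of_gt (hupos r₀ hr₀K)
    have hdd : HasDerivAt d (Φd r₀ - ψ' r₀) r₀ :=
      (hΦd r₀ hr₀R hne).sub (hψ.deriv r₀ hr₀R hne)
    have hgd : HasDerivAt g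
        (((Φd r₀ - ψ' r₀) * u r₀ - d r₀ * u' r₀)/(u r₀)^2) r₀ := hdd.div hud hu0
    have h0 := hloc.hasDerivAt_eq_zero hgd
    have hnum0 : (Φd r₀ - ψ' r₀) * u r₀ - d r₀ * u' r₀ = 0 := by
      rcases div_eq_zero_iff.mp h0 with h | h
      · exact h
      · exact absurd h (pow_ne_zero 2 hu0)
    set F : ℝ → ℝ := fun r => (r * Φd r - r * ψ' r) * u r - (r * u' r) * (Φ r - ψ r)
      with hF
    have hFr₀ : F r₀ = 0 := by
      have hid : F r₀ = r₀ * ((Φd r₀ - ψ' r₀) * u r₀ - d r₀ * u' r₀) := by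
        rw [hF, hd]; dsimp only; ring
      rw [hid, hnum0, mul_zero]
    rcases Metric.eventually_nhds_iff.mp (hdd.continuousAt.eventually
      (eventually_lt_nhds hdr₀neg)) with ⟨η₁, hη₁, hball₁⟩
    have habsne : 0 < |r₀ - rs| := abs_pos.mpr (sub_ne_zero.mpr hne)
    set σ : ℝ := min (min (η₁/2) (r₀/2)) (|r₀ - rs|/2) with hσ
    have hσpos : 0 < σ := lt_min (lt_min (by linarith) (by linarith)) (by linarith)
    have hσ1 : σ ≤ η₁/2 := le_trans (min_le_left _ _) (min_le_left _ _)
    have hσ2 : σ ≤ r₀/2 := le_trans (min_le_left _ _) (min_le_right _ _)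
    have hσ3 : σ ≤ |r₀ - rs|/2 := min_le_right _ _
    have hmemI : ∀ y ∈ Icc (r₀-σ) r₀, (y ∈ Ioo (0:ℝ) R ∧ y ≠ rs ∧ d y < 0) := by
      intro y hy
      have hy0 : 0 < y := by linarith [hy.1]
      have hyR : y < R := lt_of_le_of_lt hy.2 (lt_trans hr₀b hbR)
      have hdy : d y < 0 := by
        apply hball₁
        rw [Real.dist_eq, abs_sub_lt_iff]
        constructor <;> [linarith [hy.2]; linarith [hy.1]]
      refine ⟨⟨hy0, hyR⟩, ?_, hdy⟩
      rcases lt_or_gt_of_ne hne with hc | hc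
      · -- r₀ < rs
        intro hcon'
        rw [hcon'] at hy
        linarith [hy.2]
      · -- rs < r₀
        intro hcon'
        rw [hcon'] at hy
        rw [abs_of_pos (by linarith : (0:ℝ) < r₀ - rs)] at hσ3
        linarith [hy.1]
    have hFderiv : ∀ y ∈ Icc (r₀-σ) r₀,
        HasDerivAt F ((u y/y) * (Φ y - (k:ℝ)^2 * ψ y)) y := by
      intro y hy
      obtain ⟨hyIoo, hyne, _⟩ := hmemI y hy
      have hy0 : y ≠ 0 := ne_of_gt hyIoo.1
      have h1 := hΦode y hyIoo hyne
      have h2 := hψ.ode y hyIoo hyne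
      have h3 : HasDerivAt u (u' y) y := hasDerivAt_u hu hyIoo
      have h4 := hu.ode y hyIoo hyne
      have h5 := hΦd y hyIoo hyne
      have h6 := hψ.deriv y hyIoo hyne
      have hq := ((h1.sub h2).mul h3).sub (h4.mul (h5.sub h6))
      rw [hF]
      refine hq.congr_deriv ?_
      set c : ℝ := if y < rs then (1:ℝ) else 0 with hc
      simp only [Pi.neg_apply, Pi.add_apply, Pi.sub_apply, Pi.mul_apply]
      field_simp
      ring
    have hFcont : ContinuousOn F (Icc (r₀-σ) r₀) :=
      fun y hy => (hFderiv y hy).continuousAt.continuousWithinAt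
    have hk2 : (1:ℝ) ≤ (k:ℝ)^2 := by
      have : (1:ℝ) ≤ (k:ℝ) := by exact_mod_cast hk
      nlinarith
    have hFanti : StrictAntiOn F (Icc (r₀-σ) r₀) := by
      apply strictAntiOn_of_deriv_neg (convex_Icc _ _) hFcont
      intro y hy
      rw [interior_Icc] at hy
      have hy' : y ∈ Icc (r₀-σ) r₀ := Ioo_subset_Icc_self hy
      obtain ⟨hyIoo, hyne, hdy⟩ := hmemI y hy'
      rw [(hFderiv y hy').deriv]
      have hΦy : 0 ≤ Φ y := hΦnn y ⟨hyIoo.1.le, hyIoo.2.le⟩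
      have huy : 0 < u y := hu.pos y ⟨hyIoo.1.le, hyIoo.2⟩
      have hdy' : Φ y - ψ y < 0 := by rw [hd] at hdy; exact hdy
      have key : Φ y - (k:ℝ)^2 * ψ y < 0 := by
        have e1 : Φ y - (k:ℝ)^2 * ψ y
            = (k:ℝ)^2 * (Φ y - ψ y) + (1-(k:ℝ)^2) * Φ y := by ring
        have e2 : (k:ℝ)^2 * (Φ y - ψ y) < 0 :=
          mul_neg_of_pos_of_neg (by nlinarith) hdy'
        have e3 : (1-(k:ℝ)^2) * Φ y ≤ 0 :=
          mul_nonpos_of_nonpos_of_nonneg (by linarith) hΦy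
        linarith
      exact mul_neg_of_pos_of_neg (div_pos huy hyIoo.1) key
    have hFpos : ∀ y ∈ Ioo (r₀-σ) r₀, 0 < F y := by
      intro y hy
      have h := hFanti (Ioo_subset_Icc_self hy)
        (right_mem_Icc.mpr (by linarith)) hy.2
      rw [hFr₀] at h
      exact h
    have hgmono : StrictMonoOn g (Icc (r₀-σ) r₀) := by
      apply strictMonoOn_of_deriv_pos (convex_Icc _ _)
      · intro y hy
        obtain ⟨hyIoo, hyne, _⟩ := hmemI y hy
        have hdd' : HasDerivAt d (Φd y - ψ' y) y :=
          (hΦd y hyIoo hyne).sub (hψ.deriv y hyIoo hyne)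
        have huy : 0 < u y := hu.pos y ⟨hyIoo.1.le, hyIoo.2⟩
        exact ((hdd'.div (hasDerivAt_u hu hyIoo)
          (ne_of_gt huy)).continuousAt).continuousWithinAt
      · intro y hy
        rw [interior_Icc] at hy
        have hy' : y ∈ Icc (r₀-σ) r₀ := Ioo_subset_Icc_self hy
        obtain ⟨hyIoo, hyne, hdy⟩ := hmemI y hy'
        have huy : 0 < u y := hu.pos y ⟨hyIoo.1.le, hyIoo.2⟩
        have hdd' : HasDerivAt d (Φd y - ψ' y) y :=
          (hΦd y hyIoo hyne).sub (hψ.deriv y hyIoo hyne)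
        have hgd' : HasDerivAt g
            (((Φd y - ψ' y) * u y - d y * u' y)/(u y)^2) y :=
          hdd'.div (hasDerivAt_u hu hyIoo) (ne_of_gt huy)
        rw [hgd'.deriv]
        have hidy : (Φd y - ψ' y) * u y - d y * u' y = F y / y := by
          rw [eq_div_iff (ne_of_gt hyIoo.1), hF, hd]
          dsimp only
          ring
        rw [hidy]
        exact div_pos (div_pos (hFpos y hy) hyIoo.1) (pow_pos huy 2)
    have hend : g (r₀-σ) < g r₀ :=
      hgmono (left_mem_Icc.mpr (by linarith)) (right_mem_Icc.mpr (by linarith))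
        (by linarith)
    have hback : g r₀ ≤ g (r₀-σ) := hmin ⟨by linarith, by linarith⟩
    linarith
/-- there is `C > 0` such that `ω_k ≥ C` for every `k ≥ 1`,
where `ω_k = -u'(r*) - ψ_k(r*)`. -/
theorem omega_k_uniformly_pos
    (R rs lam : ℝ) (hR : 0 < R) (hrs : 0 < rs) (hrsR : rs < R)
    (u u' : ℝ → ℝ) (hu : EigenProfile R rs lam u u') :
    ∃ C > (0 : ℝ), ∀ k : ℕ, 1 ≤ k →
      ∀ (ψ ψ' : ℝ → ℝ) (dplus dminus : ℝ),
        PsiProfile R rs lam u k ψ ψ' dplus dminus →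
        C ≤ -(u' rs) - ψ rs := by
  obtain ⟨Φ, Φd, PL, PR, c, hc, hΦrs, hcont, hnn, h0, hRpos, hderiv, hode, hPL, hPR, hjump⟩ :=
    exists_Phi hR hrs hrsR hu
  refine ⟨c, hc, ?_⟩
  intro k hk ψ ψ' dplus dminus hψ
  have hle := psi_le_Phi hR hrs hrsR hu hk hψ hcont hnn h0 hRpos hderiv hode hPL hPR hjump
  rw [hΦrs] at hle
  linarith

end
end
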